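/- arXiv:1911.01539 — 8 statements merged into one kernel-verified Lean document; each statement's English description precedes it below -/
import Mathlib

section
/- Let f : [0,T] → ℂⁿ be continuous and define g(s) := ∫₀ᵀ Λ(s−t) f(t) dt for s ∈ [0,T]. Then g is twice continuously differentiable on [0,T], satisfies the second-order ODE g''(s) + (℧Aᵀ℧⁻¹ − A)g'(s) − ℧Aᵀ℧⁻¹A g(s) = −℧ f(s) for all s ∈ [0,T], and satisfies the boundary conditions g'(0) = −ΘAᵀΘ⁻¹ g(0) and g'(T) = A g(T). -/
open MeasureTheory Matrix Set NormedSpace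

lemma mapR_mul {n : ℕ} (M N : Matrix (Fin n) (Fin n) ℝ) :
    (M * N).map (Complex.ofReal) = M.map (Complex.ofReal) * N.map (Complex.ofReal) :=
  Matrix.map_mul (f := Complex.ofRealHom)

noncomputable def toOp {n : ℕ} (M : Matrix (Fin n) (Fin n) ℝ) : (Fin n → ℂ) →L[ℂ] (Fin n → ℂ) :=
  LinearMap.toContinuousLinearMap ((M.map (Complex.ofReal)).mulVecLin)

lemma toOp_apply {n : ℕ} (M : Matrix (Fin n) (Fin n) ℝ) (x : Fin n → ℂ) :
    toOp M x = (M.map (Complex.ofReal)) *ᵥ x := rfl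

noncomputable def toOpHom (n : ℕ) :
    Matrix (Fin n) (Fin n) ℝ →+* ((Fin n → ℂ) →L[ℂ] (Fin n → ℂ)) where
  toFun := toOp
  map_one' := by
    ext x i
    simp [toOp_apply, Matrix.map_one Complex.ofReal Complex.ofReal_zero Complex.ofReal_one]
  map_mul' M N := by
    ext x i
    rw [ContinuousLinearMap.mul_apply, toOp_apply, toOp_apply, toOp_apply, mapR_mul,
      ← Matrix.mulVec_mulVec]
  map_zero' := by ext x i; simp [toOp_apply]
  map_add' M N := by
    ext x i
    simp [toOp_apply, Matrix.map_add, Matrix.add_mulVec]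

lemma toOpHom_apply {n : ℕ} (M : Matrix (Fin n) (Fin n) ℝ) :
    toOpHom n M = toOp M := rfl

lemma toOp_smul {n : ℕ} (r : ℝ) (M : Matrix (Fin n) (Fin n) ℝ) :
    toOp (r • M) = r • toOp M := by
  ext x i
  simp [toOp_apply, Matrix.map_smul, Matrix.smul_mulVec, Complex.real_smul]

lemma toOp_continuous (n : ℕ) : Continuous (toOp (n := n)) := by
  let L : Matrix (Fin n) (Fin n) ℝ →ₗ[ℝ] ((Fin n → ℂ) →L[ℂ] (Fin n → ℂ)) :=
    { toFun := toOp
      map_add' := (toOpHom n).map_add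
      map_smul' := toOp_smul }
  exact L.continuous_of_finiteDimensional

lemma toOp_exp {n : ℕ} (M : Matrix (Fin n) (Fin n) ℝ) :
    toOp (exp M) = exp (toOp M) := by
  letI : SeminormedRing (Matrix (Fin n) (Fin n) ℝ) := Matrix.linftyOpSemiNormedRing
  letI : NormedRing (Matrix (Fin n) (Fin n) ℝ) := Matrix.linftyOpNormedRing
  letI : NormedAlgebra ℝ (Matrix (Fin n) (Fin n) ℝ) := Matrix.linftyOpNormedAlgebra
  letI : NormedAlgebra ℚ (Matrix (Fin n) (Fin n) ℝ) := NormedAlgebra.restrictScalars ℚ ℝ _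
  exact map_exp (toOpHom n) (toOp_continuous n) M

lemma exp_smul_add {𝔸 : Type*} [NormedRing 𝔸] [NormedAlgebra ℝ 𝔸] [CompleteSpace 𝔸]
    (a : 𝔸) (s t : ℝ) : exp (s • a) * exp (t • a) = exp ((s + t) • a) := by
  rw [add_smul]
  letI : NormedAlgebra ℚ 𝔸 := NormedAlgebra.restrictScalars ℚ ℝ 𝔸
  exact (NormedSpace.exp_add_of_commute (((Commute.refl a).smul_left s).smul_right t)).symm

lemma exp_smul_mul_neg {𝔸 : Type*} [NormedRing 𝔸] [NormedAlgebra ℝ 𝔸] [CompleteSpace 𝔸]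
    (a : 𝔸) (s : ℝ) : exp (s • a) * exp ((-s) • a) = 1 := by
  rw [exp_smul_add, add_neg_cancel, zero_smul, NormedSpace.exp_zero]

lemma exp_smul_neg_mul {𝔸 : Type*} [NormedRing 𝔸] [NormedAlgebra ℝ 𝔸] [CompleteSpace 𝔸]
    (a : 𝔸) (s : ℝ) : exp ((-s) • a) * exp (s • a) = 1 := by
  rw [exp_smul_add, neg_add_cancel, zero_smul, NormedSpace.exp_zero]

lemma HasDerivAt.clm_applyC {n : ℕ} {c : ℝ → ((Fin n → ℂ) →L[ℂ] (Fin n → ℂ))}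
    {c' : (Fin n → ℂ) →L[ℂ] (Fin n → ℂ)} {u : ℝ → Fin n → ℂ} {u' : Fin n → ℂ} {x : ℝ}
    (hc : HasDerivAt c c' x) (hu : HasDerivAt u u' x) :
    HasDerivAt (fun y => c y (u y)) (c' (u x) + c x u') x := by
  have hc2 : HasDerivAt (fun y => (c y).restrictScalars ℝ) (c'.restrictScalars ℝ) x :=
    (ContinuousLinearMap.restrictScalarsL ℂ (Fin n → ℂ) (Fin n → ℂ) ℝ
      ℝ).hasFDerivAt.comp_hasDerivAt x hc
  exact hc2.clm_apply hu

set_option maxHeartbeats 1000000 in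
theorem stmt0
    (n : ℕ) (T : ℝ) (hT : 0 < T)
    (A Θ : Matrix (Fin n) (Fin n) ℝ)
    (hΘskew : Θᵀ = -Θ) (hΘinv : IsUnit Θ)
    (℧ : Matrix (Fin n) (Fin n) ℝ)
    (h℧ : ℧ = -(A * Θ + Θ * Aᵀ)) (h℧inv : IsUnit ℧)
    (Λ : ℝ → Matrix (Fin n) (Fin n) ℝ)
    (hΛ : ∀ τ : ℝ, Λ τ = if 0 ≤ τ then exp (τ • A) * Θ else Θ * exp ((-τ) • Aᵀ))
    (f : ℝ → Fin n → ℂ) (hf : ContinuousOn f (Set.Icc 0 T))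
    (g : ℝ → Fin n → ℂ)
    (hg : ∀ s : ℝ, g s = ∫ t in (0:ℝ)..T, ((Λ (s - t)).map (Complex.ofReal)) *ᵥ f t) :
    ∃ g' g'' : ℝ → Fin n → ℂ,
      (∀ s ∈ Set.Icc (0:ℝ) T, HasDerivWithinAt g (g' s) (Set.Icc 0 T) s) ∧
      (∀ s ∈ Set.Icc (0:ℝ) T, HasDerivWithinAt g' (g'' s) (Set.Icc 0 T) s) ∧
      ContinuousOn g' (Set.Icc 0 T) ∧
      ContinuousOn g'' (Set.Icc 0 T) ∧
      (∀ s ∈ Set.Icc (0:ℝ) T,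
        g'' s + ((℧ * Aᵀ * ℧⁻¹ - A).map (Complex.ofReal)) *ᵥ g' s
          - ((℧ * Aᵀ * ℧⁻¹ * A).map (Complex.ofReal)) *ᵥ g s
          = (-℧).map (Complex.ofReal) *ᵥ f s) ∧
      g' 0 = (-(Θ * Aᵀ * Θ⁻¹)).map (Complex.ofReal) *ᵥ g 0 ∧
      g' T = (A.map (Complex.ofReal)) *ᵥ g T := by
  classical
  have hΘdet : IsUnit Θ.det := (Matrix.isUnit_iff_isUnit_det Θ).mp hΘinv
  have h℧det : IsUnit ℧.det := (Matrix.isUnit_iff_isUnit_det ℧).mp h℧inv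
  set Dm := Θ * Aᵀ * Θ⁻¹ with hDm
  set Cm := ℧ * Aᵀ * ℧⁻¹ with hCm
  -- the clamped version of `f`
  set cl : ℝ → ℝ := fun t => min T (max 0 t) with hcl
  have hclmem : ∀ t, cl t ∈ Icc (0:ℝ) T := fun t =>
    ⟨le_min hT.le (le_max_left 0 t), min_le_left _ _⟩
  have hcleq : ∀ t ∈ Icc (0:ℝ) T, cl t = t := fun t ht => by
    simp [hcl, max_eq_right ht.1, min_eq_right ht.2]
  set fe : ℝ → Fin n → ℂ := fun t => f (cl t) with hfe
  have hfec : Continuous fe := by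
    apply hf.comp_continuous _ hclmem
    exact continuous_const.min (continuous_const.max continuous_id)
  have hfeeq : ∀ t ∈ Icc (0:ℝ) T, fe t = f t := fun t ht => by
    rw [hfe]; simp only [hcleq t ht]
  -- operators
  set a := toOp A with ha
  set bb := toOp Aᵀ with hbb
  set θo := toOp Θ with hθo
  set Do := toOp Dm with hDo
  set Co := toOp Cm with hCo
  set Wo := toOp ℧ with hWo
  -- matrix identities
  have hDθm : Dm * Θ = Θ * Aᵀ := by
    rw [hDm, Matrix.mul_assoc (Θ * Aᵀ) Θ⁻¹ Θ, Matrix.nonsing_inv_mul Θ hΘdet, Matrix.mul_one]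
  have hsum : A + Dm = -℧ * Θ⁻¹ := by
    have h1 : (A + Dm) * Θ = -℧ := by
      rw [add_mul, hDθm, h℧, neg_neg]
    calc A + Dm = ((A + Dm) * Θ) * Θ⁻¹ := by
          rw [Matrix.mul_assoc (A + Dm) Θ Θ⁻¹, Matrix.mul_nonsing_inv Θ hΘdet, Matrix.mul_one]
      _ = -℧ * Θ⁻¹ := by rw [h1]
  have hkeym : A * Dm + Dm * Dm = Cm * A + Cm * Dm := by
    have h2 : (A + Dm) * Dm = Cm * (A + Dm) := by
      rw [hsum, hDm, hCm]
      simp only [Matrix.mul_assoc, neg_mul, mul_neg,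
        Matrix.nonsing_inv_mul_cancel_left _ _ hΘdet,
        Matrix.nonsing_inv_mul_cancel_left _ _ h℧det]
    rw [add_mul, mul_add] at h2
    exact h2
  -- operator identities
  have hDθ : Do * θo = θo * bb := by
    have := congrArg (toOpHom n) hDθm
    simpa only [_root_.map_mul, toOpHom_apply, ← hDo, ← hθo, ← hbb] using this
  have hkey : a * Do + Do * Do = Co * a + Co * Do := by
    have := congrArg (toOpHom n) hkeym
    simpa only [_root_.map_mul, _root_.map_add, toOpHom_apply, ← ha, ← hDo, ← hCo] using this
  have hsumθ : a * θo + Do * θo = -Wo := by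
    have h1 : A * Θ + Dm * Θ = -℧ := by rw [hDθm, h℧, neg_neg]
    have := congrArg (toOpHom n) h1
    simpa only [_root_.map_mul, _root_.map_add, _root_.map_neg, toOpHom_apply,
      ← ha, ← hDo, ← hθo, ← hWo] using this
  -- exponentials
  set E : ℝ → ((Fin n → ℂ) →L[ℂ] (Fin n → ℂ)) := fun s => exp (s • a) with hE
  set F : ℝ → ((Fin n → ℂ) →L[ℂ] (Fin n → ℂ)) := fun s => exp (s • bb) with hF
  have hEd : ∀ s : ℝ, HasDerivAt E (a * E s) s := fun s =>
    hasDerivAt_exp_smul_const' (𝕂 := ℝ) a s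
  have hFd : ∀ s : ℝ, HasDerivAt F (bb * F s) s := fun s =>
    hasDerivAt_exp_smul_const' (𝕂 := ℝ) bb s
  have hEc : Continuous E := continuous_iff_continuousAt.mpr fun s => (hEd s).continuousAt
  have hFc : Continuous F := continuous_iff_continuousAt.mpr fun s => (hFd s).continuousAt
  have hEmul : ∀ s t : ℝ, E s * E t = E (s + t) := fun s t => exp_smul_add a s t
  have hFmul : ∀ s t : ℝ, F s * F t = F (s + t) := fun s t => exp_smul_add bb s t
  have hEinv : ∀ s : ℝ, E s * E (-s) = 1 := fun s => exp_smul_mul_neg a s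
  have hFinv : ∀ s : ℝ, F (-s) * F s = 1 := fun s => exp_smul_neg_mul bb s
  -- integrands and primitives
  have hPint : Continuous fun t : ℝ => (E (-t) * θo) (fe t) :=
    ((hEc.comp continuous_neg).mul continuous_const).clm_apply hfec
  have hQint : Continuous fun t : ℝ => (F t) (fe t) := hFc.clm_apply hfec
  set P : ℝ → (Fin n → ℂ) := fun s => ∫ t in (0:ℝ)..s, (E (-t) * θo) (fe t) with hP
  set Q : ℝ → (Fin n → ℂ) := fun s => ∫ t in (0:ℝ)..s, (F t) (fe t) with hQ
  have hPd : ∀ s : ℝ, HasDerivAt P ((E (-s) * θo) (fe s)) s := fun s =>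
    intervalIntegral.integral_hasDerivAt_right (hPint.intervalIntegrable 0 s)
      (hPint.stronglyMeasurable.stronglyMeasurableAtFilter) hPint.continuousAt
  have hQd : ∀ s : ℝ, HasDerivAt Q ((F s) (fe s)) s := fun s =>
    intervalIntegral.integral_hasDerivAt_right (hQint.intervalIntegrable 0 s)
      (hQint.stronglyMeasurable.stronglyMeasurableAtFilter) hQint.continuousAt
  have hPc : Continuous P := continuous_iff_continuousAt.mpr fun s => (hPd s).continuousAt
  have hQc : Continuous Q := continuous_iff_continuousAt.mpr fun s => (hQd s).continuousAt
  set u : ℝ → (Fin n → ℂ) := fun s => (E s) (P s) with hu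
  set v : ℝ → (Fin n → ℂ) := fun s => (θo * F (-s)) (Q T - Q s) with hv
  have huc : Continuous u := hEc.clm_apply hPc
  have hvc : Continuous v :=
    (continuous_const.mul (hFc.comp continuous_neg)).clm_apply (continuous_const.sub hQc)
  -- derivative of u
  have hud : ∀ s : ℝ, HasDerivAt u (a (u s) + θo (fe s)) s := by
    intro s
    have h := (hEd s).clm_applyC (hPd s)
    convert h using 1
    have e1 : (a * E s) (P s) = a (u s) := by rw [ContinuousLinearMap.mul_apply, hu]
    have e2 : (E s) ((E (-s) * θo) (fe s)) = θo (fe s) := by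
      rw [← ContinuousLinearMap.mul_apply, ← mul_assoc, hEinv s, one_mul]
    rw [e1, e2]
  -- derivative of v
  have hFnegd : ∀ s : ℝ, HasDerivAt (fun s : ℝ => F (-s)) (-(bb * F (-s))) s := by
    intro s
    have h := hasDerivAt_exp_smul_const' (𝕂 := ℝ) (-bb) s
    have hsm : ∀ w : ℝ, exp (w • -bb) = exp ((-w) • bb) := fun w =>
      congrArg (exp) (by module)
    have hfun : (fun u : ℝ => exp (u • -bb)) = fun u : ℝ => F (-u) := by
      funext w
      show exp (w • -bb) = exp ((-w) • bb)
      exact hsm w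
    have hval : -bb * exp (s • -bb) = -(bb * F (-s)) := by
      show -bb * exp (s • -bb) = -(bb * exp ((-s) • bb))
      rw [hsm s]
      ext x
      simp only [ContinuousLinearMap.mul_apply, ContinuousLinearMap.neg_apply]
    rw [hfun, hval] at h
    exact h
  have hvd : ∀ s : ℝ, HasDerivAt v (-(Do (v s)) - θo (fe s)) s := by
    intro s
    have hcd : HasDerivAt (fun s : ℝ => θo * F (-s)) (θo * -(bb * F (-s))) s :=
      (hFnegd s).const_mul θo
    have hwd : HasDerivAt (fun s : ℝ => Q T - Q s) (-((F s) (fe s))) s :=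
      (hQd s).const_sub (Q T)
    have h := hcd.clm_applyC hwd
    convert h using 1
    have e1 : (θo * -(bb * F (-s))) (Q T - Q s) = -(Do (v s)) := by
      have hop : θo * -(bb * F (-s)) = -(Do * (θo * F (-s))) := by
        ext x
        have h := congrArg (fun L : (Fin n → ℂ) →L[ℂ] (Fin n → ℂ) => L ((F (-s)) x)) hDθ
        simp only [ContinuousLinearMap.mul_apply] at h
        simp only [ContinuousLinearMap.mul_apply, ContinuousLinearMap.neg_apply, map_neg]
        rw [h]

      rw [hop, ContinuousLinearMap.neg_apply, ContinuousLinearMap.mul_apply]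
    have e2 : (θo * F (-s)) (-((F s) (fe s))) = -(θo (fe s)) := by
      rw [map_neg, ← ContinuousLinearMap.mul_apply, mul_assoc, hFinv s, mul_one]
    rw [e1, e2]
    abel
  -- the candidate derivatives
  set g1 : ℝ → (Fin n → ℂ) := fun s => a (u s) - Do (v s) with hg1
  set g2 : ℝ → (Fin n → ℂ) := fun s => a (a (u s)) + Do (Do (v s)) - Wo (fe s) with hg2
  have hg1d : ∀ s : ℝ, HasDerivAt g1 (g2 s) s := by
    intro s
    have h1 : HasDerivAt (fun s : ℝ => a (u s)) (a (a (u s) + θo (fe s))) s := by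
      simpa using (hasDerivAt_const s a).clm_applyC (hud s)
    have h2 : HasDerivAt (fun s : ℝ => Do (v s)) (Do (-(Do (v s)) - θo (fe s))) s := by
      simpa using (hasDerivAt_const s Do).clm_applyC (hvd s)
    have h : HasDerivAt g1 _ s := h1.sub h2
    convert h using 1
    have h3 : a (θo (fe s)) + Do (θo (fe s)) = -(Wo (fe s)) := by
      have := congrArg (fun L : (Fin n → ℂ) →L[ℂ] (Fin n → ℂ) => L (fe s)) hsumθ
      simpa [ContinuousLinearMap.add_apply, ContinuousLinearMap.mul_apply,
        ContinuousLinearMap.neg_apply] using this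
    rw [hg2]
    simp only [map_add, map_sub, map_neg]
    linear_combination -h3
  -- splitting of g
  have hguv : ∀ s ∈ Icc (0:ℝ) T, g s = u s + v s := by
    intro s hs
    have hnice1 : ∀ t ∈ Icc (0:ℝ) s,
        (Λ (s - t)).map Complex.ofReal *ᵥ f t = (E s) ((E (-t) * θo) (fe t)) := by
      intro t ht
      have h0 : (0:ℝ) ≤ s - t := sub_nonneg.mpr ht.2
      have hmem : t ∈ Icc (0:ℝ) T := ⟨ht.1, le_trans ht.2 hs.2⟩
      rw [← toOp_apply, hΛ, if_pos h0, ← hfeeq t hmem]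
      have hop : toOp (exp ((s - t) • A) * Θ) = E s * (E (-t) * θo) := by
        have h1 : toOp (exp ((s - t) • A) * Θ) = toOp (exp ((s - t) • A)) * θo :=
          _root_.map_mul (toOpHom n) _ _
        rw [h1, toOp_exp, toOp_smul, ← ha, ← mul_assoc, hEmul s (-t), ← sub_eq_add_neg]
      rw [hop, ContinuousLinearMap.mul_apply]
    have hnice2 : ∀ t ∈ Icc s T,
        (Λ (s - t)).map Complex.ofReal *ᵥ f t = (θo * F (-s)) ((F t) (fe t)) := by
      intro t ht
      have hmem : t ∈ Icc (0:ℝ) T := ⟨le_trans hs.1 ht.1, ht.2⟩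
      rw [← toOp_apply, ← hfeeq t hmem]
      have hop : toOp (Λ (s - t)) = θo * (F (-s) * F t) := by
        have hFm : F (-s) * F t = F (t - s) := by rw [hFmul, neg_add_eq_sub]
        rcases eq_or_lt_of_le ht.1 with heq | hlt
        · rw [← heq, sub_self, hΛ, if_pos le_rfl, hFinv s, mul_one]
          have : toOp (exp ((0:ℝ) • A) * Θ) = toOp (exp ((0:ℝ) • A)) * θo :=
            _root_.map_mul (toOpHom n) _ _
          rw [this, toOp_exp, toOp_smul, ← ha]
          have hz : (0:ℝ) • a = 0 := by module
          rw [hz, NormedSpace.exp_zero, one_mul]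
        · have hneg : s - t < 0 := sub_neg.mpr hlt
          rw [hΛ, if_neg (not_le.mpr hneg), hFm]
          have : toOp (Θ * exp ((-(s - t)) • Aᵀ)) = θo * toOp (exp ((-(s - t)) • Aᵀ)) :=
            _root_.map_mul (toOpHom n) _ _
          rw [this, toOp_exp, toOp_smul, ← hbb, neg_sub]
      rw [hop, ← mul_assoc, ContinuousLinearMap.mul_apply]
    have hI1 : (∫ t in (0:ℝ)..s, (Λ (s - t)).map Complex.ofReal *ᵥ f t) = u s := by
      rw [intervalIntegral.integral_congr (g := fun t => (E s) ((E (-t) * θo) (fe t)))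
        (fun t ht => hnice1 t (by rwa [uIcc_of_le hs.1] at ht))]
      have hus : u s = (E s) (P s) := rfl
      have hPs : P s = ∫ t in (0:ℝ)..s, (E (-t) * θo) (fe t) := rfl
      rw [hus, hPs]
      exact ContinuousLinearMap.intervalIntegral_comp_comm (E s)
        (hPint.intervalIntegrable 0 s)
    have hI2 : (∫ t in s..T, (Λ (s - t)).map Complex.ofReal *ᵥ f t) = v s := by
      rw [intervalIntegral.integral_congr (g := fun t => (θo * F (-s)) ((F t) (fe t)))
        (fun t ht => hnice2 t (by rwa [uIcc_of_le hs.2] at ht))]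
      have hvs : v s = (θo * F (-s)) (Q T - Q s) := rfl
      have hQTs : Q T - Q s = ∫ t in s..T, (F t) (fe t) :=
        intervalIntegral.integral_interval_sub_left
          (hQint.intervalIntegrable 0 T) (hQint.intervalIntegrable 0 s)
      rw [hvs, hQTs]
      exact ContinuousLinearMap.intervalIntegral_comp_comm (θo * F (-s))
        (hQint.intervalIntegrable s T)
    -- integrability of the original integrand on the two pieces
    have hcont1 : Continuous fun t : ℝ => (E s) ((E (-t) * θo) (fe t)) :=
      continuous_const.clm_apply hPint
    have hcont2 : Continuous fun t : ℝ => (θo * F (-s)) ((F t) (fe t)) :=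
      continuous_const.clm_apply hQint
    have hint1 : IntervalIntegrable
        (fun t => (Λ (s - t)).map Complex.ofReal *ᵥ f t) volume 0 s := by
      refine (hcont1.intervalIntegrable 0 s).congr ?_
      refine fun t ht => ?_
      rw [Set.uIoc_of_le hs.1] at ht
      exact (hnice1 t (Ioc_subset_Icc_self ht)).symm
    have hint2 : IntervalIntegrable
        (fun t => (Λ (s - t)).map Complex.ofReal *ᵥ f t) volume s T := by
      refine (hcont2.intervalIntegrable s T).congr ?_
      refine fun t ht => ?_
      rw [Set.uIoc_of_le hs.2] at ht
      exact (hnice2 t (Ioc_subset_Icc_self ht)).symm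
    have hsplit := intervalIntegral.integral_add_adjacent_intervals hint1 hint2
    rw [hg s, ← hsplit, hI1, hI2]
  -- assemble
  refine ⟨g1, g2, ?_, ?_, ?_, ?_, ?_, ?_, ?_⟩
  · intro s hs
    have huv : HasDerivAt (fun x => u x + v x) (g1 s) s := by
      have h : HasDerivAt (fun x => u x + v x) _ s := (hud s).add (hvd s)
      convert h using 1
      show a (u s) - Do (v s) = a (u s) + θo (fe s) + (-(Do (v s)) - θo (fe s))
      abel
    exact (huv.hasDerivWithinAt).congr (fun x hx => hguv x hx) (hguv s hs)
  · intro s hs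
    exact (hg1d s).hasDerivWithinAt
  · exact ((a.continuous.comp huc).sub (Do.continuous.comp hvc)).continuousOn
  · exact (((a.continuous.comp (a.continuous.comp huc)).add
      (Do.continuous.comp (Do.continuous.comp hvc))).sub
      (Wo.continuous.comp hfec)).continuousOn
  · intro s hs
    have e1 : toOp (Cm - A) = Co - a := by
      have h := map_sub (toOpHom n) Cm A
      simpa only [toOpHom_apply] using h
    have e2 : toOp (Cm * A) = Co * a := by
      have h := _root_.map_mul (toOpHom n) Cm A
      simpa only [toOpHom_apply] using h
    have e3 : toOp (-℧) = -Wo := by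
      have h := map_neg (toOpHom n) ℧
      simpa only [toOpHom_apply] using h
    have hg2s : g2 s = a (a (u s)) + Do (Do (v s)) - Wo (fe s) := rfl
    have hg1s : g1 s = a (u s) - Do (v s) := rfl
    rw [← toOp_apply, ← toOp_apply, ← toOp_apply, e1, e2, e3, hguv s hs, ← hfeeq s hs,
      hg2s, hg1s]
    simp only [ContinuousLinearMap.sub_apply, ContinuousLinearMap.mul_apply,
      ContinuousLinearMap.neg_apply, map_add, map_sub]
    have h2v : a (Do (v s)) + Do (Do (v s)) = Co (a (v s)) + Co (Do (v s)) := by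
      have h := congrArg (fun L : (Fin n → ℂ) →L[ℂ] (Fin n → ℂ) => L (v s)) hkey
      simpa only [ContinuousLinearMap.add_apply, ContinuousLinearMap.mul_apply] using h
    linear_combination h2v
  · have h0 : (0:ℝ) ∈ Icc (0:ℝ) T := ⟨le_refl 0, hT.le⟩
    have hu0 : u 0 = 0 := by
      have hP0 : P 0 = 0 := intervalIntegral.integral_same
      show (E 0) (P 0) = 0
      rw [hP0, map_zero]
    have hg0 : g 0 = v 0 := by rw [hguv 0 h0, hu0, zero_add]
    have e : toOp (-Dm) = -Do := by
      have h := map_neg (toOpHom n) Dm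
      simpa only [toOpHom_apply] using h
    rw [← toOp_apply, e, hg0, ContinuousLinearMap.neg_apply]
    show a (u 0) - Do (v 0) = -(Do (v 0))
    rw [hu0, map_zero, zero_sub]
  · have hTmem : T ∈ Icc (0:ℝ) T := ⟨hT.le, le_refl T⟩
    have hvT : v T = 0 := by
      show (θo * F (-T)) (Q T - Q T) = 0
      rw [sub_self, map_zero]
    have hgT : g T = u T := by rw [hguv T hTmem, hvT, add_zero]
    rw [← toOp_apply, ← ha, hgT]
    show a (u T) - Do (v T) = a (u T)
    rw [hvT, map_zero, sub_zero]
end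

section
/- If f : [0,T] → ℂⁿ is continuous and ∫₀ᵀ Λ(s−t) f(t) dt = 0 for all s ∈ [0,T], then f is identically zero. In particular, 0 is not an eigenvalue of the integral operator 𝓛 with kernel Λ. -/
open MeasureTheory Matrix Set NormedSpace

section core
variable {n : ℕ}

attribute [local instance] Matrix.linftyOpNormedAddCommGroup Matrix.linftyOpNormedRing
  Matrix.linftyOpNormedAlgebra

theorem myExpAdd (X : Matrix (Fin n) (Fin n) ℂ) (a b : ℝ) :
    exp (a • X) * exp (b • X) = exp ((a + b) • X) := by
  rw [add_smul]
  exact (exp_add_of_commute (((Commute.refl X).smul_left a).smul_right b)).symm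

theorem myExpUnit (X : Matrix (Fin n) (Fin n) ℂ) (a : ℝ) :
    exp (-a • X) * exp (a • X) = 1 := by
  rw [myExpAdd, neg_add_cancel, zero_smul, exp_zero]

theorem key (T : ℝ) (hT : 0 < T)
    (B Θc W : Matrix (Fin n) (Fin n) ℂ)
    (hW : W = -(B * Θc + Θc * Bᵀ)) (hWinv : IsUnit W)
    (g : ℝ → Fin n → ℂ) (hg : Continuous g)
    (hker : ∀ s ∈ Set.Icc (0:ℝ) T,
      (∫ t in (0:ℝ)..T,
        (if 0 ≤ s - t then exp ((s - t) • B) * Θc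
         else Θc * exp ((-(s - t)) • Bᵀ)) *ᵥ g t) = 0) :
    ∀ t ∈ Set.Icc (0:ℝ) T, g t = 0 := by
  set E : ℝ → Matrix (Fin n) (Fin n) ℂ := fun u => exp (u • B) with hE
  set E2 : ℝ → Matrix (Fin n) (Fin n) ℂ := fun u => exp (u • Bᵀ) with hE2
  have hEadd : ∀ a b, E a * E b = E (a + b) := fun a b => myExpAdd B a b
  have hE2add : ∀ a b, E2 a * E2 b = E2 (a + b) := fun a b => myExpAdd Bᵀ a b
  have hEinv : ∀ a, E (-a) * E a = 1 := fun a => myExpUnit B a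
  have hE2inv : ∀ a, E2 (-a) * E2 a = 1 := fun a => myExpUnit Bᵀ a
  have hE2inv' : ∀ a, E2 a * E2 (-a) = 1 := by
    intro a; rw [hE2add, add_neg_cancel]
    show exp ((0:ℝ) • Bᵀ) = 1
    rw [zero_smul, exp_zero]
  have hEcont : Continuous E := exp_continuous.comp (continuous_id.smul continuous_const)
  have hE2cont : Continuous E2 := exp_continuous.comp (continuous_id.smul continuous_const)
  have hEd : ∀ s, HasDerivAt E (E s * B) s := fun s => hasDerivAt_exp_smul_const B s
  have hE2d : ∀ s, HasDerivAt E2 (Bᵀ * E2 s) s := fun s => hasDerivAt_exp_smul_const' Bᵀ s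
  -- the column embedding
  let colL : (Fin n → ℂ) →L[ℂ] Matrix (Fin n) (Fin n) ℂ :=
    LinearMap.toContinuousLinearMap
      { toFun := fun v => Matrix.of fun i _ => v i
        map_add' := fun u v => rfl
        map_smul' := fun c v => rfl }
  set gM : ℝ → Matrix (Fin n) (Fin n) ℂ := fun t => colL (g t) with hgMdef
  have hgM : Continuous gM := colL.continuous.comp hg
  have hmulcol : ∀ (X : Matrix (Fin n) (Fin n) ℂ) v, X * colL v = colL (X *ᵥ v) := by
    intro X v
    ext i j
    simp [colL, Matrix.mul_apply, Matrix.mulVec, dotProduct]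
    rfl
  -- continuity of mulVec
  have hmv : ∀ (Mf : ℝ → Matrix (Fin n) (Fin n) ℂ) (v : ℝ → Fin n → ℂ),
      Continuous Mf → Continuous v → Continuous fun t => Mf t *ᵥ v t := by
    intro Mf v hMf hv
    apply continuous_pi
    intro i
    simp only [Matrix.mulVec, dotProduct]
    exact continuous_finset_sum _ fun j _ =>
      (((continuous_apply j).comp ((continuous_apply i).comp hMf)).mul ((continuous_apply j).comp hv))
  -- kernel continuity
  have hΛcont : ∀ s : ℝ, Continuous fun t =>
      (if 0 ≤ s - t then exp ((s - t) • B) * Θc else Θc * exp ((-(s - t)) • Bᵀ)) := by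
    intro s
    apply Continuous.if_le
    · exact (hEcont.comp (continuous_const.sub continuous_id)).mul continuous_const
    · exact continuous_const.mul (hE2cont.comp ((continuous_const.sub continuous_id).neg))
    · exact continuous_const
    · exact continuous_const.sub continuous_id
    · intro t ht
      rw [← ht]
      simp
  set h₁ : ℝ → Matrix (Fin n) (Fin n) ℂ := fun t => E (-t) * Θc * gM t with hh₁def
  set h₂ : ℝ → Matrix (Fin n) (Fin n) ℂ := fun t => E2 t * gM t with hh₂def
  have hh₁ : Continuous h₁ := ((hEcont.comp continuous_neg).mul continuous_const).mul hgM
  have hh₂ : Continuous h₂ := hE2cont.mul hgM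
  set K₁ : ℝ → Matrix (Fin n) (Fin n) ℂ := fun s => ∫ t in (0:ℝ)..s, h₁ t with hK₁def
  set K₂ : ℝ → Matrix (Fin n) (Fin n) ℂ := fun s => ∫ t in s..T, h₂ t with hK₂def
  have hK₁d : ∀ s, HasDerivAt K₁ (h₁ s) s := fun s =>
    (hh₁.integral_hasStrictDerivAt 0 s).hasDerivAt
  have hK₂d : ∀ s, HasDerivAt K₂ (-h₂ s) s := by
    intro s
    have h := ((hh₂.integral_hasStrictDerivAt T s).hasDerivAt).neg
    refine h.congr_of_eventuallyEq (Filter.Eventually.of_forall fun u => ?_)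
    rw [hK₂def]
    exact intervalIntegral.integral_symm T u
  -- Step 1 : the kernel equation in matrix form
  have hstep1 : ∀ s ∈ Set.Icc (0:ℝ) T, E s * K₁ s + (Θc * E2 (-s)) * K₂ s = 0 := by
    intro s hs
    have hInt : IntervalIntegrable (fun t =>
        (if 0 ≤ s - t then exp ((s - t) • B) * Θc else Θc * exp ((-(s - t)) • Bᵀ)) *ᵥ g t)
        volume 0 T := ((hmv _ _ (hΛcont s) hg).intervalIntegrable 0 T)
    have h0 : (∫ t in (0:ℝ)..T,
        (if 0 ≤ s - t then exp ((s - t) • B) * Θc else Θc * exp ((-(s - t)) • Bᵀ)) * gM t) = 0 := by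
      have := ContinuousLinearMap.intervalIntegral_comp_comm colL hInt (a := 0) (b := T)
      rw [hker s hs] at this
      refine (intervalIntegral.integral_congr fun t _ => hmulcol _ _).trans (this.trans ?_)
      exact colL.map_zero
    have int1 : @IntervalIntegrable _ _ NormedAddCommGroup.toENormedAddCommMonoid.toENormedAddMonoid (fun t =>
        (if 0 ≤ s - t then exp ((s - t) • B) * Θc else Θc * exp ((-(s - t)) • Bᵀ)) * gM t)
        volume 0 s := ((hΛcont s).mul hgM).intervalIntegrable 0 s
    have int2 : @IntervalIntegrable _ _ NormedAddCommGroup.toENormedAddCommMonoid.toENormedAddMonoid (fun t =>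
        (if 0 ≤ s - t then exp ((s - t) • B) * Θc else Θc * exp ((-(s - t)) • Bᵀ)) * gM t)
        volume s T := ((hΛcont s).mul hgM).intervalIntegrable s T
    have hsplit := intervalIntegral.integral_add_adjacent_intervals int1 int2
    rw [h0] at hsplit
    -- first piece
    have hfirst : (∫ t in (0:ℝ)..s,
        (if 0 ≤ s - t then exp ((s - t) • B) * Θc else Θc * exp ((-(s - t)) • Bᵀ)) * gM t)
        = E s * K₁ s := by
      have heq : ∀ t ∈ Set.uIcc (0:ℝ) s,
          (if 0 ≤ s - t then exp ((s - t) • B) * Θc else Θc * exp ((-(s - t)) • Bᵀ)) * gM t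
          = E s * h₁ t := by
        intro t ht
        rw [Set.uIcc_of_le hs.1] at ht
        rw [if_pos (by linarith [ht.2])]
        rw [hh₁def]
        have : exp ((s - t) • B) = E s * E (-t) := by
          rw [hEadd, ← sub_eq_add_neg]
        rw [this]
        noncomm_ring
      rw [intervalIntegral.integral_congr heq]
      have hi : @IntervalIntegrable _ _ NormedAddCommGroup.toENormedAddCommMonoid.toENormedAddMonoid h₁ volume 0 s := hh₁.intervalIntegrable 0 s
      have := ContinuousLinearMap.intervalIntegral_comp_comm
        (ContinuousLinearMap.mul ℂ (Matrix (Fin n) (Fin n) ℂ) (E s)) hi (a := 0) (b := s)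
      simpa [ContinuousLinearMap.mul_apply'] using this
    -- second piece
    have hsecond : (∫ t in s..T,
        (if 0 ≤ s - t then exp ((s - t) • B) * Θc else Θc * exp ((-(s - t)) • Bᵀ)) * gM t)
        = (Θc * E2 (-s)) * K₂ s := by
      have heq : ∀ t ∈ Set.uIcc s T,
          (if 0 ≤ s - t then exp ((s - t) • B) * Θc else Θc * exp ((-(s - t)) • Bᵀ)) * gM t
          = (Θc * E2 (-s)) * h₂ t := by
        intro t ht
        rw [Set.uIcc_of_le hs.2] at ht
        rcases eq_or_lt_of_le ht.1 with hst | hst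
        · rw [← hst]
          rw [if_pos (by linarith), sub_self, zero_smul, exp_zero, one_mul, hh₂def]
          have : (Θc * E2 (-s)) * (E2 s * gM s) = Θc * ((E2 (-s) * E2 s) * gM s) := by
            noncomm_ring
          rw [this, hE2inv, one_mul]
        · rw [if_neg (by linarith), hh₂def]
          have : exp ((-(s - t)) • Bᵀ) = E2 (-s) * E2 t := by
            rw [hE2add, neg_sub, ← sub_eq_neg_add]
          rw [this]
          noncomm_ring
      rw [intervalIntegral.integral_congr heq]
      have hi : @IntervalIntegrable _ _ NormedAddCommGroup.toENormedAddCommMonoid.toENormedAddMonoid h₂ volume s T := hh₂.intervalIntegrable s T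
      have := ContinuousLinearMap.intervalIntegral_comp_comm
        (ContinuousLinearMap.mul ℂ (Matrix (Fin n) (Fin n) ℂ) (Θc * E2 (-s))) hi (a := s) (b := T)
      simpa [ContinuousLinearMap.mul_apply'] using this
    rw [hfirst, hsecond] at hsplit
    exact hsplit
  -- Step 2 : multiply by E (-s)
  have hstep2 : ∀ s ∈ Set.Icc (0:ℝ) T, K₁ s + (E (-s) * Θc * E2 (-s)) * K₂ s = 0 := by
    intro s hs
    have h := congrArg (fun X => E (-s) * X) (hstep1 s hs)
    simp only [mul_add, ← mul_assoc, mul_zero] at h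
    rw [hEinv, one_mul] at h
    exact h
  -- Step 3 : units
  have uE : ∀ a, IsUnit (E a) := by
    intro a
    refine ⟨⟨E a, E (-a), ?_, hEinv a⟩, rfl⟩
    rw [hEadd, add_neg_cancel]
    show exp ((0:ℝ) • B) = 1
    rw [zero_smul, exp_zero]
  have uE2 : ∀ a, IsUnit (E2 a) := by
    intro a
    exact ⟨⟨E2 a, E2 (-a), hE2inv' a, hE2inv a⟩, rfl⟩
  -- Step 4 : K₂ vanishes on the interior
  have hK2z : ∀ s ∈ Set.Ioo (0:ℝ) T, K₂ s = 0 := by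
    intro s hs
    -- derivative of the "m" factor
    have hEneg : HasDerivAt (fun u => E (-u)) (-(E (-s) * B)) s := by
      have h := (hEd (-s)).scomp s (hasDerivAt_neg s)
      simp only [neg_one_smul] at h
      exact h
    have hE2neg : HasDerivAt (fun u => E2 (-u)) (-(Bᵀ * E2 (-s))) s := by
      have h := (hE2d (-s)).scomp s (hasDerivAt_neg s)
      simp only [neg_one_smul] at h
      exact h
    have hm : HasDerivAt (fun u => E (-u) * Θc * E2 (-u)) (E (-s) * W * E2 (-s)) s := by
      have h := (hEneg.mul_const Θc).mul hE2neg
      refine h.congr_deriv ?_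
      rw [hW]
      noncomm_ring
    have hpd : HasDerivAt (fun u => K₁ u + (E (-u) * Θc * E2 (-u)) * K₂ u)
        (h₁ s + ((E (-s) * W * E2 (-s)) * K₂ s + (E (-s) * Θc * E2 (-s)) * (-h₂ s))) s :=
      (hK₁d s).add (hm.mul (hK₂d s))
    have hev : (fun u => K₁ u + (E (-u) * Θc * E2 (-u)) * K₂ u) =ᶠ[nhds s]
        (fun _ => (0 : Matrix (Fin n) (Fin n) ℂ)) :=
      Filter.eventuallyEq_of_mem (Icc_mem_nhds hs.1 hs.2) (fun u hu => hstep2 u hu)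
    have hD := (hasDerivAt_const s (0 : Matrix (Fin n) (Fin n) ℂ)).unique
      (hpd.congr_of_eventuallyEq hev.symm)
    -- hD : 0 = h₁ s + (...)
    have hcancel : (E (-s) * Θc * E2 (-s)) * (-h₂ s) = -h₁ s := by
      show (E (-s) * Θc * E2 (-s)) * (-(E2 s * gM s)) = -(E (-s) * Θc * gM s)
      rw [mul_neg, neg_inj]
      have h' : (E (-s) * Θc * E2 (-s)) * (E2 s * gM s)
          = E (-s) * Θc * ((E2 (-s) * E2 s) * gM s) := by
        noncomm_ring
      rw [h', hE2inv, one_mul]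
    rw [hcancel] at hD
    have hY : (E (-s) * W * E2 (-s)) * K₂ s = 0 := by
      have : (E (-s) * W * E2 (-s)) * K₂ s
          = h₁ s + ((E (-s) * W * E2 (-s)) * K₂ s + -h₁ s) := by abel
      rw [this, ← hD]
    have hu : IsUnit (E (-s) * W * E2 (-s)) := ((uE (-s)).mul hWinv).mul (uE2 (-s))
    exact hu.mul_left_cancel (by rw [hY, mul_zero])
  -- Step 5 : g vanishes on the interior
  have hgz : ∀ s ∈ Set.Ioo (0:ℝ) T, g s = 0 := by
    intro s hs
    have hev : K₂ =ᶠ[nhds s] (fun _ => (0 : Matrix (Fin n) (Fin n) ℂ)) :=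
      Filter.eventuallyEq_of_mem (isOpen_Ioo.mem_nhds hs) (fun u hu => hK2z u hu)
    have hD := (hasDerivAt_const s (0 : Matrix (Fin n) (Fin n) ℂ)).unique
      ((hK₂d s).congr_of_eventuallyEq hev.symm)
    have h2z : h₂ s = 0 := by
      have := hD.symm
      rwa [neg_eq_zero] at this
    have h2z' : E2 s * gM s = 0 := h2z
    have hgMz : gM s = 0 := (uE2 s).mul_left_cancel (by rw [h2z', mul_zero])
    funext i
    show g s i = 0
    calc g s i = gM s i i := rfl
    _ = 0 := by rw [hgMz]; rfl
  -- Step 6 : extend to the closed interval by continuity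
  have heqon : Set.EqOn g (fun _ => 0) (Set.Icc 0 T) := by
    have h := (Set.EqOn.closure (fun u hu => hgz u hu) hg continuous_const)
    rwa [closure_Ioo hT.ne] at h
  exact fun t ht => heqon ht

end core

theorem mapExpAux {n : ℕ} (X : Matrix (Fin n) (Fin n) ℝ) :
    (exp X).map Complex.ofReal = exp (X.map Complex.ofReal) := by
  have hcont : Continuous (Complex.ofRealHom.mapMatrix (m := Fin n)) := by
    apply continuous_pi; intro i; apply continuous_pi; intro j
    exact Complex.continuous_ofReal.comp ((continuous_apply j).comp (continuous_apply i))
  letI : NormedRing (Matrix (Fin n) (Fin n) ℝ) := Matrix.linftyOpNormedRing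
  letI : NormedAlgebra ℝ (Matrix (Fin n) (Fin n) ℝ) := Matrix.linftyOpNormedAlgebra
  letI : NormedRing (Matrix (Fin n) (Fin n) ℂ) := Matrix.linftyOpNormedRing
  letI : NormedAlgebra ℝ (Matrix (Fin n) (Fin n) ℂ) := Matrix.linftyOpNormedAlgebra
  letI : NormedAlgebra ℚ (Matrix (Fin n) (Fin n) ℝ) := Matrix.linftyOpNormedAlgebra
  exact map_exp (Complex.ofRealHom.mapMatrix (m := Fin n)) hcont X

theorem mapMulAux {n : ℕ} (X Y : Matrix (Fin n) (Fin n) ℝ) :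
    (X * Y).map Complex.ofReal = X.map Complex.ofReal * Y.map Complex.ofReal := by
  ext i j
  simp [Matrix.map_apply, Matrix.mul_apply]

theorem mapTransposeAux {n : ℕ} (X : Matrix (Fin n) (Fin n) ℝ) :
    (Xᵀ).map Complex.ofReal = (X.map Complex.ofReal)ᵀ := by
  ext i j
  simp [Matrix.map_apply]

theorem mapSmulAux {n : ℕ} (r : ℝ) (X : Matrix (Fin n) (Fin n) ℝ) :
    (r • X).map Complex.ofReal = r • X.map Complex.ofReal := by
  ext i j
  simp [Matrix.map_apply, Complex.real_smul]

/-- With `Θ` antisymmetric invertible, `℧ := -(AΘ + ΘAᵀ)` invertible and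
`Λ` the two-point commutator kernel, if a continuous `f : [0,T] → ℂⁿ` satisfies
`∫₀ᵀ Λ(s-t) f(t) dt = 0` for all `s ∈ [0,T]`, then `f` vanishes identically on `[0,T]`
(so `0` is not an eigenvalue of the integral operator with kernel `Λ`). -/
theorem stmt1
    (n : ℕ) (T : ℝ) (hT : 0 < T)
    (A Θ : Matrix (Fin n) (Fin n) ℝ)
    (hΘskew : Θᵀ = -Θ) (hΘinv : IsUnit Θ)
    (℧ : Matrix (Fin n) (Fin n) ℝ)
    (h℧ : ℧ = -(A * Θ + Θ * Aᵀ)) (h℧inv : IsUnit ℧)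
    (Λ : ℝ → Matrix (Fin n) (Fin n) ℝ)
    (hΛ : ∀ τ : ℝ, Λ τ = if 0 ≤ τ then exp (τ • A) * Θ else Θ * exp ((-τ) • Aᵀ))
    (f : ℝ → Fin n → ℂ) (hf : ContinuousOn f (Set.Icc 0 T))
    (hker : ∀ s ∈ Set.Icc (0:ℝ) T,
      (∫ t in (0:ℝ)..T, ((Λ (s - t)).map (Complex.ofReal)) *ᵥ f t) = 0) :
    ∀ t ∈ Set.Icc (0:ℝ) T, f t = 0 := by
  classical
  set fc : ℝ → Fin n → ℂ := fun t => f (Set.projIcc 0 T hT.le t) with hfc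
  have hfcont : Continuous fc :=
    hf.comp_continuous (continuous_subtype_val.comp continuous_projIcc)
      (fun x => (Set.projIcc 0 T hT.le x).2)
  have hfc_eq : ∀ t ∈ Set.Icc (0:ℝ) T, fc t = f t := by
    intro t ht
    show f ↑(Set.projIcc 0 T hT.le t) = f t
    rw [Set.projIcc_of_mem hT.le ht]
  set Ac := A.map Complex.ofReal with hAc
  set Θc := Θ.map Complex.ofReal with hΘc
  set Wc := ℧.map Complex.ofReal with hWc
  have hWeq : Wc = -(Ac * Θc + Θc * Acᵀ) := by
    rw [hWc, h℧]
    have hneg : ∀ X : Matrix (Fin n) (Fin n) ℝ,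
        (-X).map Complex.ofReal = -(X.map Complex.ofReal) := by
      intro X; ext i j; simp [Matrix.map_apply]
    have hadd : ∀ X Y : Matrix (Fin n) (Fin n) ℝ,
        (X + Y).map Complex.ofReal = X.map Complex.ofReal + Y.map Complex.ofReal := by
      intro X Y; ext i j; simp [Matrix.map_apply]
    rw [hneg, hadd, mapMulAux, mapMulAux, mapTransposeAux]
  have hWinv : IsUnit Wc := h℧inv.map Complex.ofRealHom.mapMatrix
  have hmain := key T hT Ac Θc Wc hWeq hWinv fc hfcont ?_
  · intro t ht
    rw [← hfc_eq t ht]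
    exact hmain t ht
  · intro s hs
    rw [← hker s hs]
    apply intervalIntegral.integral_congr
    intro t ht
    rw [Set.uIcc_of_le hT.le] at ht
    have hfm : fc t = f t := hfc_eq t ht
    have hmat : (Λ (s - t)).map Complex.ofReal =
        (if 0 ≤ s - t then exp ((s - t) • Ac) * Θc
         else Θc * exp ((-(s - t)) • Acᵀ)) := by
      rw [hΛ]
      split_ifs with h
      · rw [mapMulAux, mapExpAux, mapSmulAux]
      · rw [mapMulAux, mapExpAux, mapSmulAux, mapTransposeAux]
    show (if 0 ≤ s - t then exp ((s - t) • Ac) * Θc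
         else Θc * exp ((-(s - t)) • Acᵀ)) *ᵥ fc t
        = (Λ (s - t)).map Complex.ofReal *ᵥ f t
    rw [hmat, hfm]
end

section
/- For every T ≥ 0, the matrix G(T) := U e^{TF} V ∈ ℝ^{n×n} is invertible. -/
open MeasureTheory Matrix Set NormedSpace

lemma exp_intertwine {m k : Type*} [Fintype m] [DecidableEq m] [Fintype k] [DecidableEq k]
    (X : Matrix m m ℝ) (Y : Matrix k k ℝ) (V : Matrix m k ℝ) (h : X * V = V * Y) :
    NormedSpace.exp X * V = V * NormedSpace.exp Y := by
  letI : SeminormedRing (Matrix m m ℝ) := Matrix.linftyOpSemiNormedRing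
  letI : NormedRing (Matrix m m ℝ) := Matrix.linftyOpNormedRing
  letI : NormedAlgebra ℝ (Matrix m m ℝ) := Matrix.linftyOpNormedAlgebra
  letI : SeminormedRing (Matrix k k ℝ) := Matrix.linftyOpSemiNormedRing
  letI : NormedRing (Matrix k k ℝ) := Matrix.linftyOpNormedRing
  letI : NormedAlgebra ℝ (Matrix k k ℝ) := Matrix.linftyOpNormedAlgebra
  have hpow : ∀ j : ℕ, X ^ j * V = V * Y ^ j := by
    intro j
    induction j with
    | zero => simp [Matrix.one_mul, Matrix.mul_one]
    | succ j ih =>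
        rw [pow_succ X, Matrix.mul_assoc, h, ← Matrix.mul_assoc, ih, Matrix.mul_assoc,
          ← pow_succ]
  have hL : Continuous (fun Z : Matrix m m ℝ => Z * V) :=
    continuous_id.matrix_mul continuous_const
  have hR : Continuous (fun Z : Matrix k k ℝ => V * Z) :=
    continuous_const.matrix_mul continuous_id
  let L : Matrix m m ℝ →L[ℝ] Matrix m k ℝ :=
    { toLinearMap :=
        { toFun := fun Z => Z * V
          map_add' := fun a b => Matrix.add_mul a b V
          map_smul' := fun c a => Matrix.smul_mul c a V }
      cont := hL }
  let R : Matrix k k ℝ →L[ℝ] Matrix m k ℝ :=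
    { toLinearMap :=
        { toFun := fun Z => V * Z
          map_add' := fun a b => Matrix.mul_add V a b
          map_smul' := fun c a => (Matrix.mul_smul V c a) }
      cont := hR }
  have hsX : Summable fun j : ℕ => ((j.factorial : ℝ))⁻¹ • X ^ j := expSeries_summable' X
  have hsY : Summable fun j : ℕ => ((j.factorial : ℝ))⁻¹ • Y ^ j := expSeries_summable' Y
  have key : L (NormedSpace.exp X) = R (NormedSpace.exp Y) := by
    simp only [exp_eq_tsum (𝕂 := ℝ)]
    rw [L.map_tsum hsX, R.map_tsum hsY]
    exact tsum_congr fun j => by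
      show ((j.factorial : ℝ))⁻¹ • X ^ j * V = V * ((j.factorial : ℝ))⁻¹ • Y ^ j
      rw [Matrix.smul_mul, Matrix.mul_smul, hpow]
  exact key

/-- With `Θ` antisymmetric invertible and `℧ := -(AΘ + ΘAᵀ)` invertible,
the matrix `G(T) := U e^{TF} V` is invertible for every `T ≥ 0`, where
`F = [[0, I],[℧Aᵀ℧⁻¹A, A - ℧Aᵀ℧⁻¹]]`, `U = [A, -I]`, `V = [I; -ΘAᵀΘ⁻¹]`. -/
theorem stmt2
    (n : ℕ)
    (A Θ : Matrix (Fin n) (Fin n) ℝ)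
    (hΘskew : Θᵀ = -Θ) (hΘinv : IsUnit Θ)
    (℧ : Matrix (Fin n) (Fin n) ℝ)
    (h℧ : ℧ = -(A * Θ + Θ * Aᵀ)) (h℧inv : IsUnit ℧)
    (F : Matrix (Fin n ⊕ Fin n) (Fin n ⊕ Fin n) ℝ)
    (hF : F = Matrix.fromBlocks 0 1 (℧ * Aᵀ * ℧⁻¹ * A) (A - ℧ * Aᵀ * ℧⁻¹))
    (U : Matrix (Fin n) (Fin n ⊕ Fin n) ℝ)
    (hU : U = Matrix.fromCols A (-1))
    (V : Matrix (Fin n ⊕ Fin n) (Fin n) ℝ)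
    (hV : V = Matrix.fromRows 1 (-(Θ * Aᵀ * Θ⁻¹)))
    (T : ℝ) (hT : 0 ≤ T) :
    IsUnit (U * NormedSpace.exp (T • F) * V) := by
  have hΘd : IsUnit Θ.det := (Matrix.isUnit_iff_isUnit_det Θ).mp hΘinv
  have h℧d : IsUnit ℧.det := (Matrix.isUnit_iff_isUnit_det ℧).mp h℧inv
  have hΘ1 : Θ * Θ⁻¹ = 1 := Matrix.mul_nonsing_inv Θ hΘd
  have hΘ1' : Θ⁻¹ * Θ = 1 := Matrix.nonsing_inv_mul Θ hΘd
  have h℧1 : ℧ * ℧⁻¹ = 1 := Matrix.mul_nonsing_inv ℧ h℧d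
  have h℧1' : ℧⁻¹ * ℧ = 1 := Matrix.nonsing_inv_mul ℧ h℧d
  set S : Matrix (Fin n) (Fin n) ℝ := ℧ * Θ⁻¹ with hS
  have hTA : Θ * Aᵀ = -℧ - A * Θ := by rw [h℧]; noncomm_ring
  have hB : Θ * Aᵀ * Θ⁻¹ = -S - A := by
    rw [hTA, sub_mul, neg_mul, mul_assoc, hΘ1, mul_one, hS]
  have hK : ℧ * Aᵀ * ℧⁻¹ = -S - S * A * Θ * ℧⁻¹ := by
    have h1 : ℧ * Aᵀ = -(S * ℧) - S * A * Θ := by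
      calc ℧ * Aᵀ = S * (Θ * Aᵀ) := by
            rw [hS, mul_assoc, ← mul_assoc Θ⁻¹, hΘ1', one_mul]
        _ = -(S * ℧) - S * A * Θ := by rw [hTA]; noncomm_ring
    rw [h1, sub_mul, neg_mul, mul_assoc S ℧, h℧1, mul_one]
  have hcancel : Θ * ℧⁻¹ * S = 1 := by
    rw [hS, mul_assoc, ← mul_assoc ℧⁻¹, h℧1', one_mul, hΘ1]
  have htop : (0 : Matrix (Fin n) (Fin n) ℝ) * 1 + 1 * -(Θ * Aᵀ * Θ⁻¹) = 1 * (S + A) := by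
    rw [hB]; noncomm_ring
  have hbot : ℧ * Aᵀ * ℧⁻¹ * A * 1 + (A - ℧ * Aᵀ * ℧⁻¹) * -(Θ * Aᵀ * Θ⁻¹)
      = -(Θ * Aᵀ * Θ⁻¹) * (S + A) := by
    rw [hK, hB]
    calc (-S - S * A * Θ * ℧⁻¹) * A * 1 + (A - (-S - S * A * Θ * ℧⁻¹)) * -(-S - A)
        = S * A * (Θ * ℧⁻¹ * S) + (A * S + A * A + S * S) := by noncomm_ring
      _ = S * A * 1 + (A * S + A * A + S * S) := by rw [hcancel]
      _ = -(-S - A) * (S + A) := by noncomm_ring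
  have hFV : F * V = V * (S + A) := by
    rw [hF, hV, Matrix.fromBlocks_mul_fromRows, Matrix.fromRows_mul, htop, hbot]
  have hFVs : (T • F) * V = V * (T • (S + A)) := by
    rw [Matrix.smul_mul, hFV, Matrix.mul_smul]
  have hint := exp_intertwine (T • F) (T • (S + A)) V hFVs
  have hUV : U * V = -S := by
    rw [hU, hV, Matrix.fromCols_mul_fromRows, hB]
    noncomm_ring
  have hG : U * NormedSpace.exp (T • F) * V = (-S) * NormedSpace.exp (T • (S + A)) := by
    rw [Matrix.mul_assoc, hint, ← Matrix.mul_assoc, hUV]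
  rw [hG]
  have hSu : IsUnit (-S) := by
    have : IsUnit Θ⁻¹ := Matrix.isUnit_nonsing_inv_iff.mpr hΘinv
    exact (h℧inv.mul this).neg
  exact hSu.mul (Matrix.isUnit_exp _)
end

section
/- For every T ≥ 0, det(U e^{TF} V) = e^{−T·tr(A)} · det(−℧Θ⁻¹); in particular G(0) = UV = −℧Θ⁻¹. -/
open MeasureTheory Matrix Set NormedSpace

section AuxDet

variable {k : Type*} [Fintype k] [DecidableEq k]

/-- The entry map of a matrix, as a linear map. -/
def entryLin (a b : k) : Matrix k k ℝ →ₗ[ℝ] ℝ where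
  toFun X := X a b
  map_add' _ _ := rfl
  map_smul' _ _ := rfl

attribute [local instance] Matrix.linftyOpNormedRing Matrix.linftyOpNormedAlgebra

/-- The trace, as a continuous linear map. -/
noncomputable def traceCLM (k : Type*) [Fintype k] [DecidableEq k] :
    Matrix k k ℝ →L[ℝ] ℝ :=
  LinearMap.toContinuousLinearMap (Matrix.traceLinearMap k ℝ ℝ)

lemma hasFDerivAt_det_one :
    HasFDerivAt (fun X : Matrix k k ℝ => X.det) (traceCLM k) (1 : Matrix k k ℝ) := by
  classical
  have hprod : ∀ σ : Equiv.Perm k,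
      HasFDerivAt (fun X : Matrix k k ℝ => ∏ i, X (σ i) i)
        (∑ i, (∏ j ∈ Finset.univ.erase i, (1 : Matrix k k ℝ) (σ j) j) •
          (LinearMap.toContinuousLinearMap (entryLin (σ i) i)))
        (1 : Matrix k k ℝ) := by
    intro σ
    refine HasFDerivAt.finset_prod (fun i _ => ?_)
    exact (LinearMap.toContinuousLinearMap (entryLin (σ i) i)).hasFDerivAt
  have hsum : HasFDerivAt
      (fun X : Matrix k k ℝ => ∑ σ : Equiv.Perm k,
        ((Equiv.Perm.sign σ : ℤ) : ℝ) * ∏ i, X (σ i) i)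
      (∑ σ : Equiv.Perm k, ((Equiv.Perm.sign σ : ℤ) : ℝ) •
        (∑ i, (∏ j ∈ Finset.univ.erase i, (1 : Matrix k k ℝ) (σ j) j) •
          (LinearMap.toContinuousLinearMap (entryLin (σ i) i))))
      (1 : Matrix k k ℝ) :=
    HasFDerivAt.fun_sum (fun σ _ => (hprod σ).const_mul _)
  have hfun : (fun X : Matrix k k ℝ => ∑ σ : Equiv.Perm k,
      ((Equiv.Perm.sign σ : ℤ) : ℝ) * ∏ i, X (σ i) i)
      = fun X : Matrix k k ℝ => X.det := by
    funext X; rw [Matrix.det_apply']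
  rw [hfun] at hsum
  convert hsum using 1
  ext H
  simp only [ContinuousLinearMap.coe_sum', Finset.sum_apply, ContinuousLinearMap.coe_smul',
    Pi.smul_apply, LinearMap.coe_toContinuousLinearMap', smul_eq_mul]
  have hterm : ∀ σ : Equiv.Perm k, σ ≠ 1 →
      ((Equiv.Perm.sign σ : ℤ) : ℝ) *
        (∑ i, (∏ j ∈ Finset.univ.erase i, (1 : Matrix k k ℝ) (σ j) j) * entryLin (σ i) i H) = 0 := by
    intro σ hσ
    obtain ⟨i₀, hi₀⟩ : ∃ x, σ x ≠ x := by
      by_contra hcon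
      push_neg at hcon
      exact hσ (Equiv.ext fun x => by simp [hcon x])
    have : ∀ i, (∏ j ∈ Finset.univ.erase i, (1 : Matrix k k ℝ) (σ j) j) = 0 := by
      intro i
      by_cases h : i = i₀
      · have hσi : σ i ≠ i := by rw [h]; exact hi₀
        have hmem : σ i ∈ Finset.univ.erase i :=
          Finset.mem_erase.2 ⟨hσi, Finset.mem_univ _⟩
        have hne : σ (σ i) ≠ σ i := fun hc => hσi (σ.injective hc)
        exact Finset.prod_eq_zero hmem (Matrix.one_apply_ne hne)
      · have hmem : i₀ ∈ Finset.univ.erase i :=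
          Finset.mem_erase.2 ⟨fun hc => h hc.symm, Finset.mem_univ _⟩
        exact Finset.prod_eq_zero hmem (Matrix.one_apply_ne hi₀)
    simp [this]
  rw [Finset.sum_eq_single (1 : Equiv.Perm k) (fun σ _ hσ => hterm σ hσ)
    (fun h => absurd (Finset.mem_univ _) h)]
  have : ∀ i : k, (∏ j ∈ Finset.univ.erase i, (1 : Matrix k k ℝ) ((1 : Equiv.Perm k) j) j) = 1 := by
    intro i
    exact Finset.prod_eq_one (fun j _ => Matrix.one_apply_eq j)
  simp [this, entryLin, traceCLM, Matrix.trace, Matrix.diag]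

lemma det_exp_smul (B : Matrix k k ℝ) (t : ℝ) :
    (exp (t • B)).det = Real.exp (t * B.trace) := by
  classical
  set g : ℝ → ℝ := fun s => (exp (s • B)).det with hg_def
  have h0 : HasDerivAt g B.trace 0 := by
    have he : HasDerivAt (fun s : ℝ => exp (s • B)) (exp ((0 : ℝ) • B) * B) 0 :=
      hasDerivAt_exp_smul_const B (0 : ℝ)
    have he' : HasDerivAt (fun s : ℝ => exp (s • B)) B 0 := by
      simpa [exp_zero] using he
    have hdet : HasFDerivAt (fun X : Matrix k k ℝ => X.det) (traceCLM k)
        (exp ((0 : ℝ) • B)) := by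
      rw [zero_smul, exp_zero]; exact hasFDerivAt_det_one
    have := hdet.comp_hasDerivAt 0 he'
    exact this
  have hadd : ∀ t s : ℝ, g s = g t * g (s - t) := by
    intro t s
    have hc : Commute (t • B) ((s - t) • B) :=
      ((Commute.refl B).smul_left t).smul_right (s - t)
    have hsb : s • B = t • B + (s - t) • B := by rw [← add_smul, add_sub_cancel]
    have : exp (s • B) = exp (t • B) * exp ((s - t) • B) :=
      (congrArg exp hsb).trans (Matrix.exp_add_of_commute _ _ hc)
    simp [g, this, Matrix.det_mul]
  have hg : ∀ t : ℝ, HasDerivAt g (g t * B.trace) t := by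
    intro t
    have h1 : HasDerivAt (fun s : ℝ => g (s - t)) B.trace t := by
      have hi : HasDerivAt (fun s : ℝ => s - t) 1 t := (hasDerivAt_id t).sub_const t
      have := HasDerivAt.comp t (by simpa using h0) hi
      rw [mul_one] at this; exact this
    have h2 : HasDerivAt (fun s : ℝ => g t * g (s - t)) (g t * B.trace) t := h1.const_mul _
    exact h2.congr_of_eventuallyEq (Filter.Eventually.of_forall (fun s => hadd t s))
  set c := B.trace with hc_def
  have hφ : ∀ u : ℝ, HasDerivAt (fun s => g s * Real.exp (-(s * c))) 0 u := by
    intro u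
    have hinner : HasDerivAt (fun s : ℝ => Real.exp (-(s * c))) (Real.exp (-(u * c)) * -(1 * c)) u := by
      have hl : HasDerivAt (fun s : ℝ => -(s * c)) (-(1 * c)) u :=
        ((hasDerivAt_id u).mul_const c).neg
      exact (Real.hasDerivAt_exp _).comp u hl
    have h := (hg u).mul hinner
    have : g u * c * Real.exp (-(u * c)) + g u * (Real.exp (-(u * c)) * -(1 * c)) = 0 := by ring
    rwa [this] at h
  have hconst : ∀ u : ℝ, g u * Real.exp (-(u * c)) = 1 := by
    have hdiff : Differentiable ℝ (fun s => g s * Real.exp (-(s * c))) :=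
      fun u => (hφ u).differentiableAt
    have hderiv : ∀ u, deriv (fun s => g s * Real.exp (-(s * c))) u = 0 :=
      fun u => (hφ u).deriv
    intro u
    have := is_const_of_deriv_eq_zero hdiff hderiv u 0
    simpa [g] using this
  have h := hconst t
  have hne : Real.exp (-(t * c)) ≠ 0 := Real.exp_ne_zero _
  have : g t = Real.exp (t * c) := by
    have := congrArg (· * Real.exp (t * c)) h
    simpa [mul_assoc, ← Real.exp_add] using this
  simpa [g] using this

lemma mul_exp_of_semiconj {m : Type*} [Fintype m] [DecidableEq m]
    (U : Matrix k m ℝ) (P : Matrix m m ℝ) (Q : Matrix k k ℝ)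
    (h : U * P = Q * U) : U * exp P = exp Q * U := by
  classical
  have hpow : ∀ j : ℕ, U * P ^ j = Q ^ j * U := by
    intro j
    induction j with
    | zero => simp
    | succ j ih =>
      rw [pow_succ, ← Matrix.mul_assoc, ih, Matrix.mul_assoc, h, pow_succ,
        Matrix.mul_assoc]
  let L : Matrix m m ℝ →ₗ[ℝ] Matrix k m ℝ :=
    { toFun := fun X => U * X
      map_add' := fun X Y => Matrix.mul_add U X Y
      map_smul' := fun c X => (Matrix.mul_smul U c X) }
  let R : Matrix k k ℝ →ₗ[ℝ] Matrix k m ℝ :=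
    { toFun := fun X => X * U
      map_add' := fun X Y => Matrix.add_mul X Y U
      map_smul' := fun c X => (Matrix.smul_mul c X U) }
  have hsumP : Summable (fun j : ℕ => ((j.factorial : ℝ))⁻¹ • P ^ j) :=
    expSeries_summable' (𝕂 := ℝ) P
  have hsumQ : Summable (fun j : ℕ => ((j.factorial : ℝ))⁻¹ • Q ^ j) :=
    expSeries_summable' (𝕂 := ℝ) Q
  have hL := (LinearMap.toContinuousLinearMap L).map_tsum hsumP
  have hR := (LinearMap.toContinuousLinearMap R).map_tsum hsumQ
  rw [exp_eq_tsum ℝ, exp_eq_tsum ℝ]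
  have hLmap : U * (∑' j : ℕ, ((j.factorial : ℝ))⁻¹ • P ^ j)
      = ∑' j : ℕ, ((j.factorial : ℝ))⁻¹ • (U * P ^ j) := by
    simpa [L, LinearMap.coe_toContinuousLinearMap', Matrix.mul_smul] using hL
  have hRmap : (∑' j : ℕ, ((j.factorial : ℝ))⁻¹ • Q ^ j) * U
      = ∑' j : ℕ, ((j.factorial : ℝ))⁻¹ • (Q ^ j * U) := by
    simpa [R, LinearMap.coe_toContinuousLinearMap', Matrix.smul_mul] using hR
  rw [hLmap, hRmap]
  exact tsum_congr (fun j => by rw [hpow j])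

end AuxDet

/-- With the data of Statement 2,
`det(U e^{TF} V) = e^{-T tr A} det(-℧Θ⁻¹)` for every `T ≥ 0`; in particular
`G(0) = U V = -℧Θ⁻¹`. -/
theorem stmt3
    (n : ℕ)
    (A Θ : Matrix (Fin n) (Fin n) ℝ)
    (hΘskew : Θᵀ = -Θ) (hΘinv : IsUnit Θ)
    (℧ : Matrix (Fin n) (Fin n) ℝ)
    (h℧ : ℧ = -(A * Θ + Θ * Aᵀ)) (h℧inv : IsUnit ℧)
    (F : Matrix (Fin n ⊕ Fin n) (Fin n ⊕ Fin n) ℝ)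
    (hF : F = Matrix.fromBlocks 0 1 (℧ * Aᵀ * ℧⁻¹ * A) (A - ℧ * Aᵀ * ℧⁻¹))
    (U : Matrix (Fin n) (Fin n ⊕ Fin n) ℝ)
    (hU : U = Matrix.fromCols A (-1))
    (V : Matrix (Fin n ⊕ Fin n) (Fin n) ℝ)
    (hV : V = Matrix.fromRows 1 (-(Θ * Aᵀ * Θ⁻¹))) :
    (∀ T : ℝ, 0 ≤ T →
      (U * NormedSpace.exp (T • F) * V).det = Real.exp (-(T * A.trace)) * (-(℧ * Θ⁻¹)).det) ∧
    U * V = -(℧ * Θ⁻¹) := by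
  have hΘdet : IsUnit Θ.det := (Matrix.isUnit_iff_isUnit_det Θ).mp hΘinv
  have h℧det : IsUnit ℧.det := (Matrix.isUnit_iff_isUnit_det ℧).mp h℧inv
  have hΘΘ : Θ * Θ⁻¹ = 1 := Matrix.mul_nonsing_inv Θ hΘdet
  have h℧℧ : ℧⁻¹ * ℧ = 1 := Matrix.nonsing_inv_mul ℧ h℧det
  set M : Matrix (Fin n) (Fin n) ℝ := -(℧ * Aᵀ * ℧⁻¹) with hM
  -- U * V = -(℧ * Θ⁻¹)
  have hUV : U * V = -(℧ * Θ⁻¹) := by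
    rw [hU, hV, Matrix.fromCols_mul_fromRows, h℧]
    simp only [Matrix.mul_one, Matrix.neg_mul, Matrix.one_mul, neg_neg, Matrix.add_mul,
      Matrix.mul_assoc, hΘΘ]
  -- U * F = M * U
  have hUF : U * F = M * U := by
    rw [hU, hF, Matrix.fromCols_mul_fromBlocks, Matrix.mul_fromCols, hM]
    refine congrArg₂ Matrix.fromCols ?_ ?_ <;> noncomm_ring
  -- trace of M
  have htrM : M.trace = -A.trace := by
    rw [hM, Matrix.trace_neg]
    congr 1
    rw [Matrix.trace_mul_comm (℧ * Aᵀ) ℧⁻¹, ← Matrix.mul_assoc, h℧℧, Matrix.one_mul,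
      Matrix.trace_transpose]
  constructor
  · intro T _
    have hcomm : U * (T • F) = (T • M) * U := by
      rw [Matrix.mul_smul, hUF, Matrix.smul_mul]
    have hpush : U * exp (T • F) = exp (T • M) * U :=
      mul_exp_of_semiconj U (T • F) (T • M) hcomm
    rw [hpush, Matrix.mul_assoc, hUV, Matrix.det_mul, det_exp_smul, htrM]
    ring_nf
  · exact hUV
end

section
/- The 2n×2n block matrix K := [[Iₙ, Θ],[A, −ΘAᵀ]] satisfies det(K) = det(℧); in particular K is invertible, with inverse K⁻¹ = [[Iₙ + Θ℧⁻¹A, −Θ℧⁻¹],[−℧⁻¹A, ℧⁻¹]]. -/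
open Matrix

/-- With `Θ` antisymmetric and `℧ := -(AΘ + ΘAᵀ)` invertible, the block
matrix `K = [[I, Θ],[A, -ΘAᵀ]]` satisfies `det K = det ℧`; in particular `K` is invertible,
with inverse `K⁻¹ = [[I + Θ℧⁻¹A, -Θ℧⁻¹],[-℧⁻¹A, ℧⁻¹]]`. -/
theorem stmt6
    (n : ℕ)
    (A Θ : Matrix (Fin n) (Fin n) ℝ)
    (hΘskew : Θᵀ = -Θ)
    (℧ : Matrix (Fin n) (Fin n) ℝ)
    (h℧ : ℧ = -(A * Θ + Θ * Aᵀ)) (h℧inv : IsUnit ℧)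
    (K : Matrix (Fin n ⊕ Fin n) (Fin n ⊕ Fin n) ℝ)
    (hK : K = Matrix.fromBlocks 1 Θ A (-(Θ * Aᵀ))) :
    K.det = ℧.det ∧ IsUnit K ∧
      K⁻¹ = Matrix.fromBlocks (1 + Θ * ℧⁻¹ * A) (-(Θ * ℧⁻¹)) (-(℧⁻¹ * A)) ℧⁻¹ := by
  have hdet : K.det = ℧.det := by
    rw [hK, det_fromBlocks_one₁₁]
    congr 1
    rw [h℧]
    noncomm_ring
  have hKunit : IsUnit K := by
    rw [Matrix.isUnit_iff_isUnit_det, hdet, ← Matrix.isUnit_iff_isUnit_det]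
    exact h℧inv
  have h1 : ℧ * ℧⁻¹ = 1 := Matrix.mul_nonsing_inv ℧ (Matrix.isUnit_iff_isUnit_det ℧ |>.mp h℧inv)
  have key : (A * Θ + Θ * Aᵀ) * ℧⁻¹ = -1 := by
    have h1' : -(A * Θ + Θ * Aᵀ) * ℧⁻¹ = 1 := by rw [← h℧]; exact h1
    linear_combination (norm := noncomm_ring) -h1'
  refine ⟨hdet, hKunit, ?_⟩
  apply Matrix.inv_eq_right_inv
  rw [hK, Matrix.fromBlocks_multiply]
  have htl : 1 * (1 + Θ * ℧⁻¹ * A) + Θ * -(℧⁻¹ * A) = 1 := by noncomm_ring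
  have htr : 1 * -(Θ * ℧⁻¹) + Θ * ℧⁻¹ = 0 := by noncomm_ring
  have hbl : A * (1 + Θ * ℧⁻¹ * A) + -(Θ * Aᵀ) * -(℧⁻¹ * A) = 0 := by
    linear_combination (norm := noncomm_ring) key * A
  have hbr : A * -(Θ * ℧⁻¹) + -(Θ * Aᵀ) * ℧⁻¹ = 1 := by
    linear_combination (norm := noncomm_ring) -key
  rw [htl, htr, hbl, hbr, Matrix.fromBlocks_one]
end

section
/- For all s, t ∈ [0,T], the kernel admits the Green-function representation Λ(s−t) = [Iₙ 0] ( e^{sF} V G(T)⁻¹ U e^{(T−t)F} − χ_{[0,s]}(t) · e^{(s−t)F} ) [0; ℧], where χ_{[0,s]}(t) equals 1 if t ≤ s and 0 otherwise, [Iₙ 0] ∈ ℝ^{n×2n} and [0; ℧] ∈ ℝ^{2n×n}. -/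
open MeasureTheory Matrix Set NormedSpace

lemma exp_fromBlocks_diag {n : ℕ} (X Y : Matrix (Fin n) (Fin n) ℝ) :
    NormedSpace.exp (Matrix.fromBlocks X 0 0 Y)
      = Matrix.fromBlocks (NormedSpace.exp X) 0 0 (NormedSpace.exp Y) := by
  letI : NormedRing (Matrix (Fin n) (Fin n) ℝ) := Matrix.linftyOpNormedRing
  letI : NormedAlgebra ℝ (Matrix (Fin n) (Fin n) ℝ) := Matrix.linftyOpNormedAlgebra
  letI : NormedRing (Matrix (Fin n ⊕ Fin n) (Fin n ⊕ Fin n) ℝ) := Matrix.linftyOpNormedRing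
  letI : NormedAlgebra ℝ (Matrix (Fin n ⊕ Fin n) (Fin n ⊕ Fin n) ℝ) := Matrix.linftyOpNormedAlgebra
  letI : NormedAlgebra ℚ (Matrix (Fin n) (Fin n) ℝ) := Matrix.linftyOpNormedAlgebra
  letI : NormedAlgebra ℚ (Matrix (Fin n ⊕ Fin n) (Fin n ⊕ Fin n) ℝ) := Matrix.linftyOpNormedAlgebra
  let φ : (Matrix (Fin n) (Fin n) ℝ × Matrix (Fin n) (Fin n) ℝ) →+*
      Matrix (Fin n ⊕ Fin n) (Fin n ⊕ Fin n) ℝ :=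
    { toFun := fun p => Matrix.fromBlocks p.1 0 0 p.2
      map_one' := Matrix.fromBlocks_one
      map_mul' := fun p q => by
        rw [Matrix.fromBlocks_multiply]
        simp [← Matrix.fromBlocks_zero]
      map_zero' := Matrix.fromBlocks_zero
      map_add' := fun p q => by
        rw [Matrix.fromBlocks_add]
        simp }
  have hφ : Continuous φ :=
    Continuous.matrix_fromBlocks continuous_fst continuous_const continuous_const continuous_snd
  have h1 : NormedSpace.exp (φ (X, Y)) = φ (NormedSpace.exp (X, Y)) := (map_exp φ hφ _).symm
  have h2 : NormedSpace.exp ((X, Y) : Matrix (Fin n) (Fin n) ℝ × Matrix (Fin n) (Fin n) ℝ)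
      = (NormedSpace.exp X, NormedSpace.exp Y) := by
    ext1
    · exact Prod.fst_exp _
    · exact Prod.snd_exp _
  have : φ (X, Y) = Matrix.fromBlocks X 0 0 Y := rfl
  rw [← this, h1, h2]
  rfl

/-- Green-function representation of the commutator kernel: for all
`s, t ∈ [0,T]`,
`Λ(s-t) = [I 0] (e^{sF} V G(T)⁻¹ U e^{(T-t)F} - χ_{[0,s]}(t) e^{(s-t)F}) [0; ℧]`,
where `G(T) = U e^{TF} V`. -/
theorem stmt7
    (n : ℕ) (T : ℝ) (hT : 0 < T)
    (A Θ : Matrix (Fin n) (Fin n) ℝ)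
    (hΘskew : Θᵀ = -Θ) (hΘinv : IsUnit Θ)
    (℧ : Matrix (Fin n) (Fin n) ℝ)
    (h℧ : ℧ = -(A * Θ + Θ * Aᵀ)) (h℧inv : IsUnit ℧)
    (Λ : ℝ → Matrix (Fin n) (Fin n) ℝ)
    (hΛ : ∀ τ : ℝ, Λ τ = if 0 ≤ τ then NormedSpace.exp (τ • A) * Θ else Θ * NormedSpace.exp ((-τ) • Aᵀ))
    (F : Matrix (Fin n ⊕ Fin n) (Fin n ⊕ Fin n) ℝ)
    (hF : F = Matrix.fromBlocks 0 1 (℧ * Aᵀ * ℧⁻¹ * A) (A - ℧ * Aᵀ * ℧⁻¹))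
    (U : Matrix (Fin n) (Fin n ⊕ Fin n) ℝ)
    (hU : U = Matrix.fromCols A (-1))
    (V : Matrix (Fin n ⊕ Fin n) (Fin n) ℝ)
    (hV : V = Matrix.fromRows 1 (-(Θ * Aᵀ * Θ⁻¹)))
    (G : Matrix (Fin n) (Fin n) ℝ)
    (hG : G = U * NormedSpace.exp (T • F) * V) :
    ∀ s ∈ Set.Icc (0:ℝ) T, ∀ t ∈ Set.Icc (0:ℝ) T,
      Λ (s - t) =
        (Matrix.fromCols 1 0 : Matrix (Fin n) (Fin n ⊕ Fin n) ℝ) *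
          (NormedSpace.exp (s • F) * V * G⁻¹ * (U * NormedSpace.exp ((T - t) • F))
            - (if t ≤ s then (1:ℝ) else 0) • NormedSpace.exp ((s - t) • F)) *
          (Matrix.fromRows 0 ℧ : Matrix (Fin n ⊕ Fin n) (Fin n) ℝ) := by
  intro s hs t ht
  -- basic invertibility facts
  have hΘd : IsUnit Θ.det := (Matrix.isUnit_iff_isUnit_det Θ).mp hΘinv
  have h℧d : IsUnit ℧.det := (Matrix.isUnit_iff_isUnit_det ℧).mp h℧inv
  have hΘ1 : Θ * Θ⁻¹ = 1 := Matrix.mul_nonsing_inv Θ hΘd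
  have hΘ2 : Θ⁻¹ * Θ = 1 := Matrix.nonsing_inv_mul Θ hΘd
  have h℧1 : ℧ * ℧⁻¹ = 1 := Matrix.mul_nonsing_inv ℧ h℧d
  have h℧2 : ℧⁻¹ * ℧ = 1 := Matrix.nonsing_inv_mul ℧ h℧d
  have cΘ : ∀ X : Matrix (Fin n) (Fin n) ℝ, Θ * (Θ⁻¹ * X) = X := fun X => by
    rw [← Matrix.mul_assoc, hΘ1, Matrix.one_mul]
  have cΘ' : ∀ X : Matrix (Fin n) (Fin n) ℝ, Θ⁻¹ * (Θ * X) = X := fun X => by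
    rw [← Matrix.mul_assoc, hΘ2, Matrix.one_mul]
  have c℧ : ∀ X : Matrix (Fin n) (Fin n) ℝ, ℧ * (℧⁻¹ * X) = X := fun X => by
    rw [← Matrix.mul_assoc, h℧1, Matrix.one_mul]
  have c℧' : ∀ X : Matrix (Fin n) (Fin n) ℝ, ℧⁻¹ * (℧ * X) = X := fun X => by
    rw [← Matrix.mul_assoc, h℧2, Matrix.one_mul]
  set M₂ : Matrix (Fin n) (Fin n) ℝ := -(Θ * Aᵀ * Θ⁻¹) with hM₂
  -- M₂ = A + ℧ Θ⁻¹
  have f2 : M₂ = A + ℧ * Θ⁻¹ := by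
    rw [hM₂, h℧, neg_mul, add_mul, Matrix.mul_assoc A Θ Θ⁻¹, hΘ1, Matrix.mul_one]
    abel
  -- the inverse S = Θ ℧⁻¹ of (M₂ - A)
  have hSM : Θ * ℧⁻¹ * (M₂ - A) = 1 := by
    rw [f2, add_sub_cancel_left, Matrix.mul_assoc, c℧', hΘ1]
  have hMS : (M₂ - A) * (Θ * ℧⁻¹) = 1 := by
    rw [f2, add_sub_cancel_left, Matrix.mul_assoc, cΘ', h℧1]
  have hSM2 : Θ * ℧⁻¹ * M₂ = 1 + Θ * ℧⁻¹ * A := by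
    rw [← sub_eq_iff_eq_add, ← Matrix.mul_sub]
    exact hSM
  have hMS2 : M₂ * (Θ * ℧⁻¹) = 1 + A * (Θ * ℧⁻¹) := by
    rw [← sub_eq_iff_eq_add, ← Matrix.sub_mul]
    exact hMS
  set P : Matrix (Fin n ⊕ Fin n) (Fin n ⊕ Fin n) ℝ := Matrix.fromBlocks 1 1 A M₂ with hP
  set Q : Matrix (Fin n ⊕ Fin n) (Fin n ⊕ Fin n) ℝ :=
    Matrix.fromBlocks (Θ * ℧⁻¹ * M₂) (-(Θ * ℧⁻¹)) (-(Θ * ℧⁻¹ * A)) (Θ * ℧⁻¹) with hQ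
  have hPQ : P * Q = 1 := by
    rw [hP, hQ, Matrix.fromBlocks_multiply, ← Matrix.fromBlocks_one, Matrix.fromBlocks_inj]
    refine ⟨?_, ?_, ?_, ?_⟩
    · rw [Matrix.one_mul, Matrix.one_mul, hSM2]; abel
    · rw [Matrix.one_mul, Matrix.one_mul]; abel
    · rw [hSM2, mul_neg, (Matrix.mul_assoc M₂ (Θ * ℧⁻¹) A).symm, hMS2]
      noncomm_ring
    · rw [hMS2]; noncomm_ring
  have hPinv : IsUnit P := (Matrix.isUnit_iff_isUnit_det P).mpr (Matrix.isUnit_det_of_right_inverse hPQ)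
  have hPQinv : P⁻¹ = Q := Matrix.inv_eq_right_inv hPQ
  -- F is conjugate to the block-diagonal matrix J = diag(A, M₂)
  have hFP : F * P = P * Matrix.fromBlocks A 0 0 M₂ := by
    rw [hF, hP, Matrix.fromBlocks_multiply, Matrix.fromBlocks_multiply, Matrix.fromBlocks_inj]
    have key1 : ℧ * Aᵀ * ℧⁻¹ * (℧ * Θ⁻¹) = ℧ * (Aᵀ * Θ⁻¹) := by
      rw [Matrix.mul_assoc (℧ * Aᵀ) ℧⁻¹, c℧', Matrix.mul_assoc]
    have key2 : ℧ * Θ⁻¹ * M₂ = -(℧ * (Aᵀ * Θ⁻¹)) := by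
      rw [hM₂, mul_neg]
      congr 1
      rw [Matrix.mul_assoc Θ Aᵀ Θ⁻¹, Matrix.mul_assoc ℧ Θ⁻¹, cΘ']
    refine ⟨by simp, by simp, by noncomm_ring, ?_⟩
    calc ℧ * Aᵀ * ℧⁻¹ * A * 1 + (A - ℧ * Aᵀ * ℧⁻¹) * M₂
        = A * M₂ - ℧ * Aᵀ * ℧⁻¹ * (M₂ - A) := by noncomm_ring
      _ = A * M₂ - ℧ * Aᵀ * ℧⁻¹ * (℧ * Θ⁻¹) := by
          rw [show M₂ - A = ℧ * Θ⁻¹ from by rw [f2]; abel]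
      _ = A * M₂ + ℧ * Θ⁻¹ * M₂ := by rw [key1, key2]; abel
      _ = A * 0 + M₂ * M₂ := by nth_rewrite 3 [f2]; noncomm_ring
  have hFPJ : F = P * Matrix.fromBlocks A 0 0 M₂ * Q := by
    have h := congrArg (· * Q) hFP
    simp only [Matrix.mul_assoc] at h
    rw [← Matrix.mul_assoc P] at h
    rwa [hPQ, Matrix.mul_one] at h
  -- exponential of F
  have hexpF : ∀ τ : ℝ, NormedSpace.exp (τ • F)
      = P * Matrix.fromBlocks (NormedSpace.exp (τ • A)) 0 0 (NormedSpace.exp (τ • M₂)) * Q := by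
    intro τ
    have h1 : P * Matrix.fromBlocks (τ • A) 0 0 (τ • M₂) * Q = τ • F := by
      rw [hFPJ, show Matrix.fromBlocks (τ • A) 0 0 (τ • M₂)
            = τ • Matrix.fromBlocks A 0 0 M₂ from by
          rw [Matrix.fromBlocks_smul, smul_zero], Matrix.mul_smul, Matrix.smul_mul]
    rw [← h1, ← hPQinv, Matrix.exp_conj P _ hPinv, exp_fromBlocks_diag, hPQinv]
  -- exponential of M₂
  have hexpM : ∀ τ : ℝ, NormedSpace.exp (τ • M₂) = Θ * NormedSpace.exp ((-τ) • Aᵀ) * Θ⁻¹ := by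
    intro τ
    have h1 : τ • M₂ = Θ * ((-τ) • Aᵀ) * Θ⁻¹ := by
      rw [hM₂, Matrix.mul_smul, Matrix.smul_mul, neg_smul, smul_neg]
    rw [h1, Matrix.exp_conj Θ _ hΘinv]
  have hEmul : ∀ a b : ℝ, NormedSpace.exp (a • M₂) * NormedSpace.exp (b • M₂) = NormedSpace.exp ((a + b) • M₂) := by
    intro a b
    rw [add_smul]
    exact (Matrix.exp_add_of_commute _ _ (((Commute.refl M₂).smul_left a).smul_right b)).symm
  have hEmul' : ∀ (a b : ℝ) (X : Matrix (Fin n) (Fin n) ℝ),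
      NormedSpace.exp (a • M₂) * (NormedSpace.exp (b • M₂) * X) = NormedSpace.exp ((a + b) • M₂) * X := by
    intro a b X
    rw [← Matrix.mul_assoc, hEmul]
  -- Q * V = [0; 1]
  have hQV : Q * V = Matrix.fromRows 0 1 := by
    rw [hV, hQ, Matrix.fromBlocks_mul_fromRows, Matrix.fromRows_ext_iff]
    constructor
    · noncomm_ring
    · rw [Matrix.mul_one, hSM2]; noncomm_ring
  -- e^{τF} V = V e^{τ M₂}
  have hEV : ∀ τ : ℝ, NormedSpace.exp (τ • F) * V
      = Matrix.fromRows (NormedSpace.exp (τ • M₂)) (M₂ * NormedSpace.exp (τ • M₂)) := by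
    intro τ
    rw [hexpF τ, Matrix.mul_assoc, hQV, Matrix.mul_assoc, Matrix.fromBlocks_mul_fromRows,
      hP, Matrix.fromBlocks_mul_fromRows, Matrix.fromRows_ext_iff]
    constructor <;> noncomm_ring
  -- U * P
  have hUP : U * P = Matrix.fromCols 0 (-(℧ * Θ⁻¹)) := by
    rw [hU, hP, Matrix.fromCols_mul_fromBlocks, Matrix.fromCols_ext_iff]
    constructor
    · noncomm_ring
    · rw [f2]; noncomm_ring
  -- U e^{τF} = ℧ Θ⁻¹ e^{τ M₂} Θ ℧⁻¹ U
  have hUE : ∀ τ : ℝ, U * NormedSpace.exp (τ • F)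
      = ℧ * Θ⁻¹ * NormedSpace.exp (τ • M₂) * (Θ * ℧⁻¹) * U := by
    intro τ
    conv_lhs => rw [hexpF τ, ← Matrix.mul_assoc, ← Matrix.mul_assoc, hUP]
    rw [Matrix.fromCols_mul_fromBlocks, hQ, Matrix.fromCols_mul_fromBlocks,
      hU, Matrix.mul_fromCols, Matrix.fromCols_ext_iff]
    constructor <;> noncomm_ring
  -- U * V
  have hUV : U * V = -(℧ * Θ⁻¹) := by
    rw [hU, hV, Matrix.fromCols_mul_fromRows, f2]
    noncomm_ring
  -- the Green matrix G
  have hGval : G = -(℧ * Θ⁻¹ * NormedSpace.exp (T • M₂)) := by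
    rw [hG, hUE T, Matrix.mul_assoc, hUV, mul_neg,
      Matrix.mul_assoc (℧ * Θ⁻¹ * NormedSpace.exp (T • M₂)) (Θ * ℧⁻¹),
      Matrix.mul_assoc Θ ℧⁻¹, c℧', hΘ1, Matrix.mul_one]
  have hGinv : G⁻¹ = -(NormedSpace.exp ((-T) • M₂) * (Θ * ℧⁻¹)) := by
    refine Matrix.inv_eq_right_inv ?_
    rw [hGval, neg_mul_neg,
      Matrix.mul_assoc (℧ * Θ⁻¹) (NormedSpace.exp (T • M₂)), hEmul' T (-T),
      show T + -T = (0:ℝ) from by ring, zero_smul, exp_zero, Matrix.one_mul,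
      Matrix.mul_assoc ℧ Θ⁻¹, cΘ', h℧1]
  -- sandwiching helpers
  have hUR : U * (Matrix.fromRows 0 ℧ : Matrix (Fin n ⊕ Fin n) (Fin n) ℝ) = -℧ := by
    rw [hU, Matrix.fromCols_mul_fromRows]
    noncomm_ring
  have hsand1 :
      (Matrix.fromCols 1 0 : Matrix (Fin n) (Fin n ⊕ Fin n) ℝ) *
        (NormedSpace.exp (s • F) * V * G⁻¹ * (U * NormedSpace.exp ((T - t) • F))) *
        (Matrix.fromRows 0 ℧ : Matrix (Fin n ⊕ Fin n) (Fin n) ℝ)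
      = NormedSpace.exp ((s - t) • M₂) * Θ := by
    rw [hEV s, hGinv, hUE (T - t)]
    simp only [Matrix.fromRows_mul, Matrix.fromCols_mul_fromRows, Matrix.mul_assoc,
      mul_neg, neg_mul, neg_neg, Matrix.one_mul, Matrix.zero_mul, add_zero, zero_add,
      hUR, h℧2, Matrix.mul_one, c℧', cΘ', cΘ, c℧, hEmul', hEmul]
    rw [show s + -T + (T - t) = s - t from by ring]
  have hsand2 :
      (Matrix.fromCols 1 0 : Matrix (Fin n) (Fin n ⊕ Fin n) ℝ) *
        NormedSpace.exp ((s - t) • F) *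
        (Matrix.fromRows 0 ℧ : Matrix (Fin n ⊕ Fin n) (Fin n) ℝ)
      = NormedSpace.exp ((s - t) • M₂) * Θ - NormedSpace.exp ((s - t) • A) * Θ := by
    rw [hexpF (s - t), hP, hQ]
    simp only [← Matrix.mul_assoc, Matrix.fromCols_mul_fromBlocks,
      Matrix.fromCols_mul_fromRows, Matrix.one_mul, Matrix.mul_one, Matrix.zero_mul,
      Matrix.mul_zero, add_zero, zero_add]
    simp only [Matrix.add_mul, Matrix.mul_assoc, neg_mul, mul_neg, h℧2, Matrix.mul_one]
    abel
  -- final assembly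
  rw [hΛ, Matrix.mul_sub, Matrix.sub_mul, Matrix.mul_smul, Matrix.smul_mul, hsand1, hsand2]
  by_cases hts : t ≤ s
  · rw [if_pos hts, if_pos (sub_nonneg.mpr hts), one_smul]
    abel
  · rw [if_neg hts, if_neg (fun h => hts (sub_nonneg.mp h)), zero_smul, sub_zero,
      hexpM (s - t), Matrix.mul_assoc, hΘ2, Matrix.mul_one]
end

section
/- If g : [0,T] → ℂⁿ is twice continuously differentiable, satisfies the homogeneous ODE g''(s) + (℧Aᵀ℧⁻¹ − A)g'(s) − ℧Aᵀ℧⁻¹A g(s) = 0 for all s ∈ [0,T], and satisfies the boundary conditions g'(0) = −ΘAᵀΘ⁻¹ g(0) and g'(T) = A g(T), then g is identically zero on [0,T]. -/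
open MeasureTheory Matrix Set NormedSpace

/-- Uniqueness for the linear ODE `f' = M *ᵥ f` on `Icc a b` with zero value at `a`. -/
lemma linODE_zero_right {n : ℕ} (M : Matrix (Fin n) (Fin n) ℂ) {a b : ℝ}
    (f : ℝ → Fin n → ℂ)
    (hf : ∀ t ∈ Set.Icc a b, HasDerivWithinAt f (M *ᵥ f t) (Set.Icc a b) t)
    (h0 : f a = 0) :
    ∀ t ∈ Set.Icc a b, f t = 0 := by
  set L : (Fin n → ℂ) →L[ℂ] (Fin n → ℂ) := LinearMap.toContinuousLinearMap M.mulVecLin with hL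
  have hLv : ∀ x, L x = M *ᵥ x := fun x => rfl
  have hv : ∀ t : ℝ, LipschitzWith ‖L‖₊ (fun x => L x) := fun _ => L.lipschitz
  have key : Set.EqOn f (fun _ => 0) (Set.Icc a b) := by
    apply ODE_solution_unique_of_mem_Icc_right (v := fun _ x => L x)
      (s := fun _ => Set.univ) (fun t _ => (hv t).lipschitzOnWith)
    · exact fun t ht => (hf t ht).continuousWithinAt
    · intro t ht
      have hmem : Set.Icc a b ∈ nhdsWithin t (Set.Ici t) := by
        apply Filter.mem_of_superset (Filter.inter_mem self_mem_nhdsWithin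
          (mem_nhdsWithin_of_mem_nhds (Iic_mem_nhds ht.2)))
        rw [Set.Ici_inter_Iic]
        exact Set.Icc_subset_Icc_left ht.1
      exact ((hf t (Set.Ico_subset_Icc_self ht)).mono_of_mem_nhdsWithin hmem).congr_deriv (hLv _).symm
    · exact fun t _ => Set.mem_univ _
    · exact continuousOn_const
    · intro t ht
      have : L (0 : Fin n → ℂ) = 0 := map_zero L
      exact (hasDerivWithinAt_const t _ (0 : Fin n → ℂ)).congr_deriv this.symm
    · exact fun t _ => Set.mem_univ _
    · exact h0
  exact fun t ht => key ht

/-- Uniqueness for the linear ODE `f' = M *ᵥ f` on `Icc a b` with zero value at `b`. -/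
lemma linODE_zero_left {n : ℕ} (M : Matrix (Fin n) (Fin n) ℂ) {a b : ℝ}
    (f : ℝ → Fin n → ℂ)
    (hf : ∀ t ∈ Set.Icc a b, HasDerivWithinAt f (M *ᵥ f t) (Set.Icc a b) t)
    (h0 : f b = 0) :
    ∀ t ∈ Set.Icc a b, f t = 0 := by
  set L : (Fin n → ℂ) →L[ℂ] (Fin n → ℂ) := LinearMap.toContinuousLinearMap M.mulVecLin with hL
  have hLv : ∀ x, L x = M *ᵥ x := fun x => rfl
  have hv : ∀ t : ℝ, LipschitzWith ‖L‖₊ (fun x => L x) := fun _ => L.lipschitz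
  have key : Set.EqOn f (fun _ => 0) (Set.Icc a b) := by
    apply ODE_solution_unique_of_mem_Icc_left (v := fun _ x => L x)
      (s := fun _ => Set.univ) (fun t _ => (hv t).lipschitzOnWith)
    · exact fun t ht => (hf t ht).continuousWithinAt
    · intro t ht
      have hmem : Set.Icc a b ∈ nhdsWithin t (Set.Iic t) := by
        apply Filter.mem_of_superset (Filter.inter_mem
          (mem_nhdsWithin_of_mem_nhds (Ici_mem_nhds ht.1)) self_mem_nhdsWithin)
        rw [Set.Ici_inter_Iic]
        exact Set.Icc_subset_Icc_right ht.2
      exact ((hf t (Set.Ioc_subset_Icc_self ht)).mono_of_mem_nhdsWithin hmem).congr_deriv (hLv _).symm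
    · exact fun t _ => Set.mem_univ _
    · exact continuousOn_const
    · intro t ht
      have : L (0 : Fin n → ℂ) = 0 := map_zero L
      exact (hasDerivWithinAt_const t _ (0 : Fin n → ℂ)).congr_deriv this.symm
    · exact fun t _ => Set.mem_univ _
    · exact h0
  exact fun t ht => key ht

/-- With `Θ` antisymmetric invertible and `℧ := -(AΘ + ΘAᵀ)` invertible,
any twice continuously differentiable solution `g : [0,T] → ℂⁿ` of the homogeneous ODE
`g'' + (℧Aᵀ℧⁻¹ - A)g' - ℧Aᵀ℧⁻¹A g = 0` with boundary conditions `g'(0) = -ΘAᵀΘ⁻¹ g(0)`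
and `g'(T) = A g(T)` vanishes identically on `[0,T]`. -/
theorem stmt8
    (n : ℕ) (T : ℝ) (hT : 0 < T)
    (A Θ : Matrix (Fin n) (Fin n) ℝ)
    (hΘskew : Θᵀ = -Θ) (hΘinv : IsUnit Θ)
    (℧ : Matrix (Fin n) (Fin n) ℝ)
    (h℧ : ℧ = -(A * Θ + Θ * Aᵀ)) (h℧inv : IsUnit ℧)
    (g g' g'' : ℝ → Fin n → ℂ)
    (hg' : ∀ s ∈ Set.Icc (0:ℝ) T, HasDerivWithinAt g (g' s) (Set.Icc 0 T) s)
    (hg'' : ∀ s ∈ Set.Icc (0:ℝ) T, HasDerivWithinAt g' (g'' s) (Set.Icc 0 T) s)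
    (hcont : ContinuousOn g'' (Set.Icc 0 T))
    (hODE : ∀ s ∈ Set.Icc (0:ℝ) T,
      g'' s + ((℧ * Aᵀ * ℧⁻¹ - A).map (Complex.ofReal)) *ᵥ g' s
        - ((℧ * Aᵀ * ℧⁻¹ * A).map (Complex.ofReal)) *ᵥ g s = 0)
    (hbc0 : g' 0 = (-(Θ * Aᵀ * Θ⁻¹)).map (Complex.ofReal) *ᵥ g 0)
    (hbcT : g' T = (A.map (Complex.ofReal)) *ᵥ g T) :
    ∀ s ∈ Set.Icc (0:ℝ) T, g s = 0 := by
  set Ac : Matrix (Fin n) (Fin n) ℂ := A.map Complex.ofReal with hAc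
  set M : Matrix (Fin n) (Fin n) ℂ := (℧ * Aᵀ * ℧⁻¹).map Complex.ofReal with hM
  -- rewrite the coefficient matrices
  have hmap1 : (℧ * Aᵀ * ℧⁻¹ - A).map (Complex.ofReal) = M - Ac :=
    Matrix.map_sub _ (fun a b => by push_cast; ring) _ _
  have hmap2 : (℧ * Aᵀ * ℧⁻¹ * A).map (Complex.ofReal) = M * Ac :=
    Matrix.map_mul (f := Complex.ofRealHom)
  -- the auxiliary function h := g' - A g satisfies h' = -M h
  set h : ℝ → Fin n → ℂ := fun s => g' s - Ac *ᵥ g s with hh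
  have hhT : h T = 0 := by simp [hh, hbcT]
  have hhderiv : ∀ s ∈ Set.Icc (0:ℝ) T,
      HasDerivWithinAt h ((-M) *ᵥ h s) (Set.Icc 0 T) s := by
    intro s hs
    have hAg : HasDerivWithinAt (fun t => Ac *ᵥ g t) (Ac *ᵥ g' s) (Set.Icc 0 T) s := by
      have := ((LinearMap.toContinuousLinearMap
          Ac.mulVecLin).restrictScalars ℝ).hasFDerivAt.comp_hasDerivWithinAt s (hg' s hs)
      exact this
    have hd := (hg'' s hs).sub hAg
    have hODEs := hODE s hs
    rw [hmap1, hmap2] at hODEs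
    have heq : g'' s - Ac *ᵥ g' s = (-M) *ᵥ h s := by
      have h2 : g'' s = (M * Ac) *ᵥ g s - (M - Ac) *ᵥ g' s := by
        rw [sub_eq_zero] at hODEs
        rw [eq_sub_iff_add_eq]
        exact hODEs
      rw [h2, hh]
      simp only [Matrix.sub_mulVec, Matrix.mulVec_sub, Matrix.mulVec_mulVec,
        Matrix.neg_mulVec, Matrix.neg_mul]
      abel
    rw [← heq]
    exact hd
  have hhzero : ∀ s ∈ Set.Icc (0:ℝ) T, h s = 0 := linODE_zero_left (-M) h hhderiv hhT
  -- hence g' = A g on [0, T]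
  have hglin : ∀ s ∈ Set.Icc (0:ℝ) T, g' s = Ac *ᵥ g s := by
    intro s hs
    have := hhzero s hs
    rwa [hh, sub_eq_zero] at this
  -- g 0 = 0 via invertibility of A + Θ Aᵀ Θ⁻¹
  have h0T : (0:ℝ) ∈ Set.Icc (0:ℝ) T := ⟨le_refl _, le_of_lt hT⟩
  have hg0 : g 0 = 0 := by
    set N : Matrix (Fin n) (Fin n) ℝ := A + Θ * Aᵀ * Θ⁻¹ with hN
    have hNΘ : N * Θ = -℧ := by
      rw [hN, h℧, add_mul, mul_assoc, Matrix.nonsing_inv_mul Θ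
        (Matrix.isUnit_iff_isUnit_det Θ |>.mp hΘinv), mul_one]
      rw [neg_neg]
    have hNdet : IsUnit N.det := by
      have h1 : N.det * Θ.det = (-℧).det := by rw [← Matrix.det_mul, hNΘ]
      have h2 : IsUnit ((-℧).det) :=
        (Matrix.isUnit_iff_isUnit_det _).mp h℧inv.neg
      exact isUnit_of_mul_isUnit_left (h1 ▸ h2)
    set Nc : Matrix (Fin n) (Fin n) ℂ := N.map Complex.ofReal with hNc
    have hNcdet : IsUnit Nc.det := by
      have : Nc.det = Complex.ofRealHom N.det := (RingHom.map_det Complex.ofRealHom N).symm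
      rw [this]
      exact hNdet.map Complex.ofRealHom
    have hker : Nc *ᵥ g 0 = 0 := by
      have h1 : g' 0 = Ac *ᵥ g 0 := hglin 0 h0T
      have h2 : Ac *ᵥ g 0 = (-(Θ * Aᵀ * Θ⁻¹)).map Complex.ofReal *ᵥ g 0 := by
        rw [← h1, hbc0]
      have hmapneg : (-(Θ * Aᵀ * Θ⁻¹)).map Complex.ofReal
          = -((Θ * Aᵀ * Θ⁻¹).map Complex.ofReal) := by
        ext i j; simp
      have hNcsplit : Nc = Ac + (Θ * Aᵀ * Θ⁻¹).map Complex.ofReal := by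
        rw [hNc, hN, hAc]
        exact Matrix.map_add _ (fun a b => by push_cast; ring) _ _
      rw [hNcsplit, Matrix.add_mulVec, h2, hmapneg, Matrix.neg_mulVec]
      abel
    calc g 0 = (1 : Matrix (Fin n) (Fin n) ℂ) *ᵥ g 0 := (Matrix.one_mulVec _).symm
      _ = (Nc⁻¹ * Nc) *ᵥ g 0 := by rw [Matrix.nonsing_inv_mul Nc hNcdet]
      _ = Nc⁻¹ *ᵥ (Nc *ᵥ g 0) := (Matrix.mulVec_mulVec _ _ _).symm
      _ = 0 := by rw [hker, Matrix.mulVec_zero]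
  -- g solves g' = A g with g 0 = 0, so g ≡ 0
  apply linODE_zero_right Ac g _ hg0
  intro t ht
  have := hg' t ht
  rwa [hglin t ht] at this
end

section
/- Let f, h ∈ L²([0,T],ℂⁿ) satisfy 𝓛f = iω f and 𝓛h = iμ h with ω, μ real. If ω ≠ μ, then ⟨f, h⟩ := ∫₀ᵀ f(t)* h(t) dt = 0. If moreover ω > 0 and μ > 0, then ⟨f̄, h⟩ = ∫₀ᵀ f(t)ᵀ h(t) dt = 0, where f̄ is the entrywise complex conjugate of f. -/
set_option maxHeartbeats 1000000


open MeasureTheory Matrix Set NormedSpace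


namespace Stmt13Aux

variable {n : ℕ}

lemma entry_bound {M : Matrix (Fin n) (Fin n) ℝ} {C : ℝ} (hM : ∀ i j, |M i j| ≤ C)
    (b : Fin n → ℂ) (j : Fin n) :
    ‖(M.map Complex.ofReal *ᵥ b) j‖ ≤ n * C * ‖b‖ := by
  have e : (M.map Complex.ofReal *ᵥ b) j = ∑ k, (M j k : ℂ) * b k := by
    simp [Matrix.mulVec, dotProduct, Matrix.map_apply]
  rw [e]
  calc ‖∑ k, (M j k : ℂ) * b k‖ ≤ ∑ k, ‖(M j k : ℂ) * b k‖ := norm_sum_le _ _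
    _ ≤ ∑ _k : Fin n, C * ‖b‖ := by
        refine Finset.sum_le_sum fun k _ => ?_
        rw [norm_mul, Complex.norm_real, Real.norm_eq_abs]
        exact mul_le_mul (hM j k) (norm_le_pi_norm b k) (norm_nonneg _)
          (le_trans (abs_nonneg _) (hM j k))
    _ = n * C * ‖b‖ := by
        simp [Finset.sum_const, Finset.card_univ, mul_assoc]

lemma mulVec_bound {M : Matrix (Fin n) (Fin n) ℝ} {C : ℝ} (hC : 0 ≤ C)
    (hM : ∀ i j, |M i j| ≤ C) (b : Fin n → ℂ) :
    ‖M.map Complex.ofReal *ᵥ b‖ ≤ n * C * ‖b‖ := by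
  refine (pi_norm_le_iff_of_nonneg (by positivity)).2 fun j => entry_bound hM b j

lemma dot_bound {M : Matrix (Fin n) (Fin n) ℝ} {C : ℝ} (hC : 0 ≤ C)
    (hM : ∀ i j, |M i j| ≤ C) (a b : Fin n → ℂ) :
    ‖a ⬝ᵥ (M.map Complex.ofReal *ᵥ b)‖ ≤ (n * (n * C)) * (‖a‖ * ‖b‖) := by
  have e : a ⬝ᵥ (M.map Complex.ofReal *ᵥ b) = ∑ i, a i * (M.map Complex.ofReal *ᵥ b) i := rfl
  rw [e]
  calc ‖∑ i, a i * (M.map Complex.ofReal *ᵥ b) i‖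
      ≤ ∑ i, ‖a i * (M.map Complex.ofReal *ᵥ b) i‖ := norm_sum_le _ _
    _ ≤ ∑ _i : Fin n, ‖a‖ * (n * C * ‖b‖) := by
        refine Finset.sum_le_sum fun i _ => ?_
        rw [norm_mul]
        exact mul_le_mul (norm_le_pi_norm a i) (entry_bound hM b i) (norm_nonneg _)
          (norm_nonneg _)
    _ = (n * (n * C)) * (‖a‖ * ‖b‖) := by
        simp [Finset.sum_const, Finset.card_univ]
        ring

lemma dot_integral {m : Measure ℝ} (a : Fin n → ℂ) {g : ℝ → Fin n → ℂ}
    (hg : Integrable g m) :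
    ∫ t, a ⬝ᵥ g t ∂m = a ⬝ᵥ ∫ t, g t ∂m := by
  have e : ∀ t, a ⬝ᵥ g t = ∑ i, a i * (ContinuousLinearMap.proj (R := ℂ)
      (φ := fun _ : Fin n => ℂ) i) (g t) := fun t => rfl
  simp only [e]
  rw [integral_finset_sum _ fun i _ =>
    (((ContinuousLinearMap.proj (R := ℂ) (φ := fun _ : Fin n => ℂ) i)).integrable_comp hg).const_mul (a i)]
  refine Finset.sum_congr rfl fun i _ => ?_
  rw [integral_const_mul]
  congr 1
  exact ((ContinuousLinearMap.proj (R := ℂ) (φ := fun _ : Fin n => ℂ) i).integral_comp_comm hg)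

lemma cont_mulVec {Λ : ℝ → Matrix (Fin n) (Fin n) ℝ} (hΛc : Continuous Λ) : Continuous
    (fun p : ℝ × (Fin n → ℂ) => (Λ p.1).map Complex.ofReal *ᵥ p.2) := by
  refine continuous_pi fun i => ?_
  simp only [Matrix.mulVec, dotProduct, Matrix.map_apply]
  refine continuous_finset_sum _ fun j _ => Continuous.mul ?_ ((continuous_apply j).comp continuous_snd)
  exact Complex.continuous_ofReal.comp
    ((continuous_apply j).comp ((continuous_apply i).comp (hΛc.comp continuous_fst)))

lemma cont_dot : Continuous (fun p : (Fin n → ℂ) × (Fin n → ℂ) => p.1 ⬝ᵥ p.2) := by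
  simp only [dotProduct]
  exact continuous_finset_sum _ fun i _ =>
    ((continuous_apply i).comp continuous_fst).mul ((continuous_apply i).comp continuous_snd)

lemma mulVec_ringHom (σ : ℂ →+* ℂ) (hσr : ∀ r : ℝ, σ r = r)
    (M : Matrix (Fin n) (Fin n) ℝ) (v : Fin n → ℂ) (j : Fin n) :
    (M.map Complex.ofReal *ᵥ fun i => σ (v i)) j = σ ((M.map Complex.ofReal *ᵥ v) j) := by
  simp only [Matrix.mulVec, dotProduct, Matrix.map_apply, map_sum, _root_.map_mul, hσr]

lemma interval_eq (T : ℝ) (hT : 0 ≤ T) {E : Type*} [NormedAddCommGroup E]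
    [NormedSpace ℝ E] (g : ℝ → E) :
    ∫ t in (0:ℝ)..T, g t = ∫ t, g t ∂(volume.restrict (Icc 0 T)) := by
  rw [intervalIntegral.integral_of_le hT]
  exact (integral_Icc_eq_integral_Ioc).symm

lemma sigma_integrable {m : Measure ℝ} (σ : ℂ →+* ℂ) (hσc : Continuous σ)
    (hσn : ∀ z, ‖σ z‖ = ‖z‖) {u : ℝ → ℂ} (hu : Integrable u m) :
    Integrable (fun x => σ (u x)) m :=
  hu.norm.mono' (hσc.comp_aestronglyMeasurable hu.aestronglyMeasurable)
    (Filter.Eventually.of_forall fun x => (hσn (u x)).le)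

lemma master (n : ℕ) (T : ℝ) (hT : 0 < T)
    (Λ : ℝ → Matrix (Fin n) (Fin n) ℝ)
    (hΛc : Continuous Λ)
    (hΛT : ∀ τ, (Λ τ)ᵀ = - Λ (-τ))
    (ω μ : ℝ) (f h : ℝ → Fin n → ℂ)
    (hf : MemLp f 2 (volume.restrict (Set.Icc 0 T)))
    (hh : MemLp h 2 (volume.restrict (Set.Icc 0 T)))
    (heigf : ∀ᵐ s ∂(volume.restrict (Set.Icc (0:ℝ) T)),
      (∫ t in (0:ℝ)..T, ((Λ (s - t)).map (Complex.ofReal)) *ᵥ f t) = (Complex.I * ω) • f s)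
    (heigh : ∀ᵐ s ∂(volume.restrict (Set.Icc (0:ℝ) T)),
      (∫ t in (0:ℝ)..T, ((Λ (s - t)).map (Complex.ofReal)) *ᵥ h t) = (Complex.I * μ) • h s)
    (σ : ℂ →+* ℂ) (hσc : Continuous σ) (hσn : ∀ z, ‖σ z‖ = ‖z‖)
    (hσr : ∀ r : ℝ, σ r = r)
    (hσi : ∀ g : ℝ → ℂ, ∫ x, σ (g x) ∂(volume.restrict (Set.Icc (0:ℝ) T))
      = σ (∫ x, g x ∂(volume.restrict (Set.Icc (0:ℝ) T)))) :
    (Complex.I * μ) * (∫ t, (fun i => σ (f t i)) ⬝ᵥ h t ∂(volume.restrict (Set.Icc (0:ℝ) T)))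
      = (- σ Complex.I * ω) *
        (∫ t, (fun i => σ (f t i)) ⬝ᵥ h t ∂(volume.restrict (Set.Icc (0:ℝ) T))) := by
  set ν : Measure ℝ := volume.restrict (Set.Icc (0:ℝ) T) with hνdef
  haveI : IsFiniteMeasure ν := by
    constructor
    rw [hνdef, Measure.restrict_apply_univ]
    exact (isCompact_Icc).measure_lt_top
  set F : ℝ → Fin n → ℂ := fun s i => σ (f s i) with hFdef
  have hfi : Integrable f ν := hf.integrable one_le_two
  have hhi : Integrable h ν := hh.integrable one_le_two
  have hFm : AEStronglyMeasurable F ν := by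
    have hc : Continuous fun v : Fin n → ℂ => fun i => σ (v i) :=
      continuous_pi fun i => hσc.comp (continuous_apply i)
    exact hc.comp_aestronglyMeasurable hf.aestronglyMeasurable
  have hFn : ∀ s, ‖F s‖ ≤ ‖f s‖ := fun s =>
    (pi_norm_le_iff_of_nonneg (norm_nonneg _)).2 fun i =>
      le_trans (le_of_eq (hσn (f s i))) (norm_le_pi_norm (f s) i)
  have hFi : Integrable F ν :=
    hfi.norm.mono' hFm (Filter.Eventually.of_forall hFn)
  -- kernel bound
  obtain ⟨C, hC0, hC⟩ : ∃ C : ℝ, 0 ≤ C ∧ ∀ τ ∈ Icc (-T) T, ∀ i j, |Λ τ i j| ≤ C := by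
    have hu : Continuous fun τ => ∑ i : Fin n, ∑ j : Fin n, |Λ τ i j| := by
      refine continuous_finset_sum _ fun i _ => continuous_finset_sum _ fun j _ => ?_
      exact continuous_abs.comp ((continuous_apply j).comp ((continuous_apply i).comp hΛc))
    obtain ⟨x0, _, hx0⟩ := isCompact_Icc.exists_isMaxOn (s := Icc (-T) T)
      ⟨-T, by constructor <;> linarith⟩ hu.continuousOn
    refine ⟨∑ i : Fin n, ∑ j : Fin n, |Λ x0 i j|,
      Finset.sum_nonneg fun i _ => Finset.sum_nonneg fun j _ => abs_nonneg _, fun τ hτ i j => ?_⟩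
    calc |Λ τ i j| ≤ ∑ j' : Fin n, |Λ τ i j'| :=
          Finset.single_le_sum (f := fun j' => |Λ τ i j'|) (fun j' _ => abs_nonneg _)
            (Finset.mem_univ j)
      _ ≤ ∑ i' : Fin n, ∑ j' : Fin n, |Λ τ i' j'| :=
          Finset.single_le_sum (f := fun i' => ∑ j' : Fin n, |Λ τ i' j'|)
            (fun i' _ => Finset.sum_nonneg fun j' _ => abs_nonneg _) (Finset.mem_univ i)
      _ ≤ _ := hx0 hτ
  have hsub : ∀ {s t : ℝ}, s ∈ Icc (0:ℝ) T → t ∈ Icc (0:ℝ) T → s - t ∈ Icc (-T) T := by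
    intro s t hs ht
    constructor
    · linarith [hs.1, hs.2, ht.1, ht.2]
    · linarith [hs.1, hs.2, ht.1, ht.2]
  set g2 : ℝ → ℝ → ℂ := fun s t => F s ⬝ᵥ ((Λ (s - t)).map Complex.ofReal *ᵥ h t) with hg2def
  -- measurability on the product
  have hmem2 : ∀ᵐ p ∂(ν.prod ν), p.1 ∈ Icc (0:ℝ) T ∧ p.2 ∈ Icc (0:ℝ) T := by
    have : ν.prod ν = (volume.prod volume).restrict (Icc (0:ℝ) T ×ˢ Icc (0:ℝ) T) := by
      rw [hνdef, Measure.prod_restrict]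
    rw [this]
    filter_upwards [ae_restrict_mem (measurableSet_Icc.prod measurableSet_Icc)] with p hp
    exact hp
  have hmeas : AEStronglyMeasurable (Function.uncurry g2) (ν.prod ν) := by
    have h1 : AEStronglyMeasurable (fun p : ℝ × ℝ => F p.1) (ν.prod ν) := hFm.comp_fst
    have h2 : AEStronglyMeasurable (fun p : ℝ × ℝ =>
        (Λ (p.1 - p.2)).map Complex.ofReal *ᵥ h p.2) (ν.prod ν) := by
      have hK : AEStronglyMeasurable (fun p : ℝ × ℝ =>
          ((p.1 - p.2 : ℝ), h p.2)) (ν.prod ν) :=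
        ((continuous_fst.sub continuous_snd).aestronglyMeasurable).prodMk
          hh.aestronglyMeasurable.comp_snd
      have h2' := (cont_mulVec hΛc).comp_aestronglyMeasurable hK
      exact h2'
    have h3 := cont_dot.comp_aestronglyMeasurable (h1.prodMk h2)
    exact h3
  have hgi : Integrable (Function.uncurry g2) (ν.prod ν) := by
    have hdom : Integrable
        (fun p : ℝ × ℝ => ((n * (n * C)) * ‖f p.1‖) * ‖h p.2‖) (ν.prod ν) :=
      (hfi.norm.const_mul _).mul_prod hhi.norm
    refine hdom.mono' hmeas ?_
    filter_upwards [hmem2] with p hp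
    have hb := dot_bound hC0 (hC _ (hsub hp.1 hp.2)) (F p.1) (h p.2)
    refine hb.trans ?_
    have : (↑n * (↑n * C)) * (‖F p.1‖ * ‖h p.2‖) ≤ (↑n * (↑n * C)) * (‖f p.1‖ * ‖h p.2‖) := by
      have hnn : (0:ℝ) ≤ (n : ℝ) * ((n : ℝ) * C) := by positivity
      exact mul_le_mul_of_nonneg_left
        (mul_le_mul_of_nonneg_right (hFn p.1) (norm_nonneg _)) hnn
    calc (↑n * (↑n * C)) * (‖F p.1‖ * ‖h p.2‖)
        ≤ (↑n * (↑n * C)) * (‖f p.1‖ * ‖h p.2‖) := this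
      _ = ((n * (n * C)) * ‖f p.1‖) * ‖h p.2‖ := by ring
  -- Fubini
  have hswap : ∫ s, ∫ t, g2 s t ∂ν ∂ν = ∫ t, ∫ s, g2 s t ∂ν ∂ν :=
    integral_integral_swap hgi
  -- inner integral, first form
  have hinner1 : ∀ᵐ s ∂ν, ∫ t, g2 s t ∂ν = (Complex.I * μ) * (F s ⬝ᵥ h s) := by
    filter_upwards [heigh, ae_restrict_mem measurableSet_Icc] with s hs hsmem
    have hKh : Integrable (fun t => (Λ (s - t)).map Complex.ofReal *ᵥ h t) ν := by
      have hm : AEStronglyMeasurable (fun t => (Λ (s - t)).map Complex.ofReal *ᵥ h t) ν := by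
        have hK : AEStronglyMeasurable (fun t : ℝ => ((s - t : ℝ), h t)) ν :=
          ((continuous_const.sub continuous_id).aestronglyMeasurable).prodMk
            hh.aestronglyMeasurable
        have h2' := (cont_mulVec hΛc).comp_aestronglyMeasurable hK
        exact h2'
      refine (hhi.norm.const_mul ((n : ℝ) * C)).mono' hm ?_
      filter_upwards [ae_restrict_mem measurableSet_Icc] with t htmem
      exact mulVec_bound hC0 (hC _ (hsub hsmem htmem)) (h t)
    have e1 : ∫ t, g2 s t ∂ν = F s ⬝ᵥ ∫ t, (Λ (s - t)).map Complex.ofReal *ᵥ h t ∂ν :=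
      dot_integral (F s) hKh
    rw [e1]
    have e2 : ∫ t, (Λ (s - t)).map Complex.ofReal *ᵥ h t ∂ν = (Complex.I * μ) • h s := by
      rw [← interval_eq T hT.le]
      exact hs
    rw [e2, dotProduct_smul, smul_eq_mul]
  -- inner integral, second form (after swap)
  have hinner2 : ∀ᵐ t ∂ν, ∫ s, g2 s t ∂ν = (- σ Complex.I * ω) * (F t ⬝ᵥ h t) := by
    filter_upwards [heigf, ae_restrict_mem measurableSet_Icc] with t ht htmem
    set w : ℝ → Fin n → ℂ := fun s => (Λ (t - s)).map Complex.ofReal *ᵥ f s with hwdef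
    have hwi : Integrable w ν := by
      have hm : AEStronglyMeasurable w ν := by
        have hK : AEStronglyMeasurable (fun s : ℝ => ((t - s : ℝ), f s)) ν :=
          ((continuous_const.sub continuous_id).aestronglyMeasurable).prodMk
            hf.aestronglyMeasurable
        have h2' := (cont_mulVec hΛc).comp_aestronglyMeasurable hK
        exact h2'
      refine (hfi.norm.const_mul ((n : ℝ) * C)).mono' hm ?_
      filter_upwards [ae_restrict_mem measurableSet_Icc] with s hsmem
      exact mulVec_bound hC0 (hC _ (hsub htmem hsmem)) (f s)
    have hwj : ∀ j : Fin n, Integrable (fun s => w s j) ν := fun j =>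
      (ContinuousLinearMap.proj (R := ℂ) (φ := fun _ : Fin n => ℂ) j).integrable_comp hwi
    -- pointwise rewrite of the integrand
    have hpt : ∀ s, g2 s t = - ∑ j, σ (w s j) * h t j := by
      intro s
      have e1 : g2 s t = (((Λ (s - t)).map Complex.ofReal)ᵀ *ᵥ F s) ⬝ᵥ h t := by
        show F s ⬝ᵥ ((Λ (s - t)).map Complex.ofReal *ᵥ h t) = _
        rw [Matrix.dotProduct_mulVec, Matrix.mulVec_transpose]
      have e2 : ((Λ (s - t)).map Complex.ofReal)ᵀ = - (Λ (t - s)).map Complex.ofReal := by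
        rw [← Matrix.transpose_map, hΛT, neg_sub]
        ext i j
        simp [Matrix.map_apply]
      rw [e1, e2, Matrix.neg_mulVec, neg_dotProduct]
      congr 1
      have e3 : ((Λ (t - s)).map Complex.ofReal *ᵥ F s) = fun j => σ (w s j) := by
        funext j
        rw [hFdef, hwdef]
        exact mulVec_ringHom σ hσr _ _ j
      rw [e3]
      rfl
    have e4 : ∫ s, g2 s t ∂ν = - ∑ j, (∫ s, σ (w s j) ∂ν) * h t j := by
      have : (fun s => g2 s t) = fun s => - ∑ j, σ (w s j) * h t j := funext hpt
      rw [this, integral_neg]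
      congr 1
      rw [integral_finset_sum _ fun j _ =>
        ((sigma_integrable σ hσc hσn (hwj j)).mul_const (h t j))]
      exact Finset.sum_congr rfl fun j _ => integral_mul_const _ _
    rw [e4]
    have e5 : ∀ j, ∫ s, σ (w s j) ∂ν = σ ((Complex.I * ω) * f t j) := by
      intro j
      rw [hσi fun s => w s j]
      congr 1
      have : ∫ s, w s j ∂ν = (∫ s, w s ∂ν) j :=
        ((ContinuousLinearMap.proj (R := ℂ) (φ := fun _ : Fin n => ℂ) j).integral_comp_comm hwi)
      rw [this]
      have : ∫ s, w s ∂ν = (Complex.I * ω) • f t := by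
        rw [hwdef, ← interval_eq T hT.le]
        exact ht
      rw [this]
      rfl
    have e6 : ∀ j, σ ((Complex.I * ω) * f t j) = σ Complex.I * (ω : ℂ) * σ (f t j) := by
      intro j
      rw [_root_.map_mul, _root_.map_mul, hσr]
    calc - ∑ j, (∫ s, σ (w s j) ∂ν) * h t j
        = - ∑ j, (σ Complex.I * (ω : ℂ)) * (σ (f t j) * h t j) := by
          congr 1
          refine Finset.sum_congr rfl fun j _ => ?_
          rw [e5 j, e6 j]; ring
      _ = (- σ Complex.I * ω) * (F t ⬝ᵥ h t) := by
          rw [← Finset.mul_sum]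
          have : F t ⬝ᵥ h t = ∑ j, σ (f t j) * h t j := rfl
          rw [this]; ring
  -- put everything together
  have hL : ∫ s, ∫ t, g2 s t ∂ν ∂ν
      = (Complex.I * μ) * ∫ s, F s ⬝ᵥ h s ∂ν := by
    rw [integral_congr_ae hinner1, integral_const_mul]
  have hR : ∫ t, ∫ s, g2 s t ∂ν ∂ν
      = (- σ Complex.I * ω) * ∫ t, F t ⬝ᵥ h t ∂ν := by
    rw [integral_congr_ae hinner2, integral_const_mul]
  have : (Complex.I * μ) * ∫ s, F s ⬝ᵥ h s ∂ν
      = (- σ Complex.I * ω) * ∫ t, F t ⬝ᵥ h t ∂ν := by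
    rw [← hL, ← hR, hswap]
  exact this

end Stmt13Aux

/-- Let `f, h ∈ L²([0,T],ℂⁿ)` satisfy `𝓛f = iω f` and `𝓛h = iμ h` with
`ω, μ` real. If `ω ≠ μ` then `⟨f,h⟩ = ∫₀ᵀ f(t)* h(t) dt = 0`; if moreover `ω > 0` and
`μ > 0`, then also `⟨f̄,h⟩ = ∫₀ᵀ f(t)ᵀ h(t) dt = 0`. -/
theorem stmt13
    (n : ℕ) (T : ℝ) (hT : 0 < T)
    (A Θ : Matrix (Fin n) (Fin n) ℝ)
    (hΘskew : Θᵀ = -Θ)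
    (Λ : ℝ → Matrix (Fin n) (Fin n) ℝ)
    (hΛ : ∀ τ : ℝ, Λ τ = if 0 ≤ τ then exp (τ • A) * Θ else Θ * exp ((-τ) • Aᵀ))
    (ω μ : ℝ)
    (f h : ℝ → Fin n → ℂ)
    (hf : MemLp f 2 (volume.restrict (Set.Icc 0 T)))
    (hh : MemLp h 2 (volume.restrict (Set.Icc 0 T)))
    (heigf : ∀ᵐ s ∂(volume.restrict (Set.Icc (0:ℝ) T)),
      (∫ t in (0:ℝ)..T, ((Λ (s - t)).map (Complex.ofReal)) *ᵥ f t)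
        = (Complex.I * ω) • f s)
    (heigh : ∀ᵐ s ∂(volume.restrict (Set.Icc (0:ℝ) T)),
      (∫ t in (0:ℝ)..T, ((Λ (s - t)).map (Complex.ofReal)) *ᵥ h t)
        = (Complex.I * μ) • h s)
    (hωμ : ω ≠ μ) :
    (∫ t in (0:ℝ)..T, star (f t) ⬝ᵥ h t) = 0 ∧
    (0 < ω → 0 < μ → (∫ t in (0:ℝ)..T, f t ⬝ᵥ h t) = 0) := by
  classical
  have hΛc : Continuous Λ := by
    have hfun : Λ = fun τ =>
        if (0:ℝ) ≤ τ then exp (τ • A) * Θ else Θ * exp ((-τ) • Aᵀ) := funext hΛ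
    rw [hfun]
    letI : SeminormedRing (Matrix (Fin n) (Fin n) ℝ) := Matrix.linftyOpSemiNormedRing
    letI : NormedRing (Matrix (Fin n) (Fin n) ℝ) := Matrix.linftyOpNormedRing
    letI : NormedAlgebra ℝ (Matrix (Fin n) (Fin n) ℝ) := Matrix.linftyOpNormedAlgebra
    letI : NormedAlgebra ℚ (Matrix (Fin n) (Fin n) ℝ) := NormedAlgebra.restrictScalars ℚ ℝ _
    have hc1 : Continuous fun τ : ℝ => exp (τ • A) * Θ :=
      (exp_continuous.comp (continuous_id.smul continuous_const)).mul continuous_const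
    have hc2 : Continuous fun τ : ℝ => Θ * exp ((-τ) • Aᵀ) :=
      continuous_const.mul (exp_continuous.comp (continuous_neg.smul continuous_const))
    refine Continuous.if_le hc1 hc2 continuous_const continuous_id fun τ hτ => ?_
    rw [← hτ]
    simp
  have hΛT : ∀ τ, (Λ τ)ᵀ = - Λ (-τ) := by
    intro τ
    rcases le_or_gt 0 τ with h0 | h0
    · rcases eq_or_lt_of_le h0 with h0' | h0'
      · subst h0'
        simp [hΛ, hΘskew]
      · rw [hΛ τ, hΛ (-τ), if_pos h0, if_neg (by linarith), neg_neg]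
        calc (exp (τ • A) * Θ)ᵀ = Θᵀ * (exp (τ • A))ᵀ := Matrix.transpose_mul _ _
          _ = (-Θ) * exp (τ • Aᵀ) := by
              rw [hΘskew, ← Matrix.exp_transpose, Matrix.transpose_smul]
          _ = -(Θ * exp (τ • Aᵀ)) := neg_mul _ _
    · rw [hΛ τ, hΛ (-τ), if_neg (not_le.2 h0), if_pos (by linarith)]
      calc (Θ * exp ((-τ) • Aᵀ))ᵀ = (exp ((-τ) • Aᵀ))ᵀ * Θᵀ := Matrix.transpose_mul _ _
        _ = exp ((-τ) • A) * (-Θ) := by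
            rw [hΘskew, ← Matrix.exp_transpose, Matrix.transpose_smul,
              Matrix.transpose_transpose]
        _ = -(exp ((-τ) • A) * Θ) := mul_neg _ _
  constructor
  · -- σ = conjugation
    have hσc : Continuous (starRingEnd ℂ) := by
      have : ⇑(starRingEnd ℂ) = (star : ℂ → ℂ) := rfl
      rw [this]; exact continuous_star
    have h1 := Stmt13Aux.master n T hT Λ hΛc hΛT ω μ f h hf hh heigf heigh
      (starRingEnd ℂ) hσc (fun z => RCLike.norm_conj z) (fun r => Complex.conj_ofReal r)
      (fun g => integral_conj)
    rw [Complex.conj_I, neg_neg] at h1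
    set J := ∫ t, (fun i => (starRingEnd ℂ) (f t i)) ⬝ᵥ h t
      ∂(volume.restrict (Set.Icc (0:ℝ) T)) with hJdef
    have hz : (Complex.I * (↑μ - ↑ω)) * J = 0 := by linear_combination h1
    have hfac : Complex.I * ((μ:ℂ) - (ω:ℂ)) ≠ 0 := by
      refine mul_ne_zero Complex.I_ne_zero (sub_ne_zero.mpr ?_)
      exact_mod_cast (Ne.symm hωμ)
    have hJ0 : J = 0 := by
      rcases mul_eq_zero.mp hz with hc | hc
      · exact absurd hc hfac
      · exact hc
    rw [Stmt13Aux.interval_eq T hT.le]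
    exact hJ0
  · intro hω hμ
    have h2 := Stmt13Aux.master n T hT Λ hΛc hΛT ω μ f h hf hh heigf heigh
      (RingHom.id ℂ) continuous_id (fun z => rfl) (fun r => rfl) (fun g => rfl)
    set J := ∫ t, (fun i => (RingHom.id ℂ) (f t i)) ⬝ᵥ h t
      ∂(volume.restrict (Set.Icc (0:ℝ) T)) with hJdef
    have hz : (Complex.I * (↑μ + ↑ω)) * J = 0 := by
      have : (RingHom.id ℂ) Complex.I = Complex.I := rfl
      rw [this] at h2
      linear_combination h2
    have hfac : Complex.I * ((μ:ℂ) + (ω:ℂ)) ≠ 0 := by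
      refine mul_ne_zero Complex.I_ne_zero ?_
      have : ((μ + ω : ℝ) : ℂ) ≠ 0 :=
        Complex.ofReal_ne_zero.mpr (ne_of_gt (add_pos hμ hω))
      simpa using this
    have hJ0 : J = 0 := by
      rcases mul_eq_zero.mp hz with hc | hc
      · exact absurd hc hfac
      · exact hc
    rw [Stmt13Aux.interval_eq T hT.le]
    exact hJ0
end
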